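/- arXiv:1612.03292 — 7 statements merged into one kernel-verified Lean document; each statement's English description precedes it below -/
import Mathlib

section
/- The generating function identity: for all real u with |u| < 1 and u ≠ 0, u / log(1+u) = 1 + ∑_{n=1}^∞ G_n u^n, where G_n = (1/n!) ∫_0^1 x(x-1)(x-2)⋯(x-n+1) dx. -/
open MeasureTheory Real

noncomputable def G (n : ℕ) : ℝ :=
  (n.factorial : ℝ)⁻¹ * ∫ x in (0:ℝ)..1, ∏ k ∈ Finset.range n, (x - k)

noncomputable def Cb (x : ℝ) (n : ℕ) : ℝ :=
  (∏ k ∈ Finset.range n, (x - k)) / n.factorial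

lemma Cb_zero (x : ℝ) : Cb x 0 = 1 := by simp [Cb]

lemma Cb_succ (x : ℝ) (n : ℕ) : Cb x (n + 1) = Cb x n * ((x - n) / (n + 1)) := by
  have h1 : (n.factorial : ℝ) ≠ 0 := Nat.cast_ne_zero.mpr n.factorial_ne_zero
  have h2 : ((n : ℝ) + 1) ≠ 0 := by positivity
  rw [Cb, Cb, Finset.prod_range_succ, Nat.factorial_succ]
  push_cast
  rw [mul_comm ((n:ℝ)+1), mul_div_mul_comm]

lemma Cb_rec (x : ℝ) (n : ℕ) : ((n : ℝ) + 1) * Cb x (n + 1) = (x - n) * Cb x n := by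
  have h2 : ((n : ℝ) + 1) ≠ 0 := by positivity
  rw [Cb_succ]
  field_simp

lemma Cb_abs_le {x : ℝ} (hx : x ∈ Set.Icc (0:ℝ) 1) (n : ℕ) : |Cb x n| ≤ 1 := by
  obtain ⟨hx0, hx1⟩ := hx
  induction n with
  | zero => simp [Cb_zero]
  | succ n ih =>
    rw [Cb_succ, abs_mul]
    have hn : (0:ℝ) ≤ n := n.cast_nonneg
    have h1 : |(x - n) / (n + 1)| ≤ 1 := by
      rw [abs_div, abs_of_pos (by positivity : (0:ℝ) < (n:ℝ) + 1)]
      rw [div_le_one (by positivity)]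
      rw [abs_le]
      constructor <;> linarith
    calc |Cb x n| * |(x - n) / (n + 1)| ≤ 1 * 1 := by
          apply mul_le_mul ih h1 (abs_nonneg _) zero_le_one
      _ = 1 := by ring

lemma Cb_continuous (n : ℕ) : Continuous fun x : ℝ => Cb x n := by
  unfold Cb
  exact (continuous_finset_prod _ fun k _ => continuous_id.sub continuous_const).div_const _

lemma aux_summable {w : ℝ} (hw : |w| < 1) :
    Summable (fun n : ℕ => (n : ℝ) * w ^ (n - 1)) := by
  rw [← summable_nat_add_iff 1]
  simp only [Nat.add_sub_cancel]
  have h1 : Summable (fun n : ℕ => (n : ℝ) ^ 1 * w ^ n) :=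
    summable_pow_mul_geometric_of_norm_lt_one 1 (by simpa using hw)
  have h2 : Summable (fun n : ℕ => w ^ n) := summable_geometric_of_abs_lt_one hw
  refine (h1.add h2).congr fun n => ?_
  push_cast
  ring

lemma summable_Cb {x y : ℝ} (hx : x ∈ Set.Icc (0:ℝ) 1) (hy : |y| < 1) :
    Summable (fun n : ℕ => Cb x n * y ^ n) := by
  apply Summable.of_norm_bounded (g := fun n => |y| ^ n)
    (summable_geometric_of_lt_one (abs_nonneg y) hy)
  intro n
  rw [Real.norm_eq_abs, abs_mul, abs_pow]
  calc |Cb x n| * |y| ^ n ≤ 1 * |y| ^ n := by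
        apply mul_le_mul_of_nonneg_right (Cb_abs_le hx n) (by positivity)
    _ = |y| ^ n := one_mul _

lemma summable_Cb_deriv {x y : ℝ} (hx : x ∈ Set.Icc (0:ℝ) 1) (hy : |y| < 1) :
    Summable (fun n : ℕ => Cb x n * ((n : ℝ) * y ^ (n - 1))) := by
  apply Summable.of_norm_bounded (g := fun n : ℕ => (n : ℝ) * |y| ^ (n - 1)) (aux_summable (by rwa [abs_abs]))
  intro n
  rw [Real.norm_eq_abs, abs_mul, abs_mul, abs_pow, Nat.abs_cast]
  calc |Cb x n| * ((n : ℝ) * |y| ^ (n - 1)) ≤ 1 * ((n : ℝ) * |y| ^ (n - 1)) := by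
        apply mul_le_mul_of_nonneg_right (Cb_abs_le hx n) (by positivity)
    _ = (n : ℝ) * |y| ^ (n - 1) := one_mul _

lemma key_hasSum {x : ℝ} (hx : x ∈ Set.Icc (0:ℝ) 1) {y : ℝ} (hy : |y| < 1) :
    HasSum (fun n : ℕ => Cb x n * y ^ n) (Real.exp (x * Real.log (1 + y))) := by
  set F : ℝ → ℝ := fun z => ∑' n : ℕ, Cb x n * z ^ n with hF
  set r : ℝ := (1 + |y|) / 2 with hr
  have hyr : |y| < r := by simp [hr]; linarith
  have hr1 : r < 1 := by simp [hr]; linarith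
  have hr0 : 0 < r := by positivity
  -- derivative of F on the ball of radius r
  have hderiv : ∀ z ∈ Metric.ball (0:ℝ) r,
      HasDerivAt F (∑' n : ℕ, Cb x n * ((n : ℝ) * z ^ (n - 1))) z := by
    intro z hz
    apply hasDerivAt_tsum_of_isPreconnected
      (u := fun n : ℕ => (n : ℝ) * r ^ (n - 1))
      (aux_summable (by rwa [abs_of_pos hr0]))
      Metric.isOpen_ball (convex_ball (0:ℝ) r).isPreconnected
      (fun n w _ => (hasDerivAt_pow n w).const_mul (Cb x n))
      ?_ (Metric.mem_ball_self hr0) ?_ hz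
    · intro n w hw
      have hw' : |w| < r := by simpa [Real.dist_eq] using hw
      rw [Real.norm_eq_abs, abs_mul, abs_mul, abs_pow, Nat.abs_cast]
      have h1 : |Cb x n| ≤ 1 := Cb_abs_le hx n
      have h2 : |w| ^ (n - 1) ≤ r ^ (n - 1) :=
        pow_le_pow_left₀ (abs_nonneg w) hw'.le _
      calc |Cb x n| * ((n : ℝ) * |w| ^ (n - 1)) ≤ 1 * ((n : ℝ) * r ^ (n - 1)) := by
            apply mul_le_mul h1 (by apply mul_le_mul_of_nonneg_left h2 (n.cast_nonneg)) (by positivity) zero_le_one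
        _ = (n : ℝ) * r ^ (n - 1) := one_mul _
    · apply summable_Cb hx
      simp
  -- the ODE: (1+z) F'(z) = x F(z) for |z| < 1
  have hODE : ∀ z : ℝ, |z| < 1 →
      (1 + z) * (∑' n : ℕ, Cb x n * ((n : ℝ) * z ^ (n - 1))) = x * F z := by
    intro z hz
    have S : Summable (fun n : ℕ => Cb x n * z ^ n) := summable_Cb hx hz
    have S' : Summable (fun n : ℕ => Cb x n * ((n : ℝ) * z ^ (n - 1))) :=
      summable_Cb_deriv hx hz
    set A : ℝ := ∑' n : ℕ, Cb x n * ((n : ℝ) * z ^ (n - 1)) with hA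
    have hshift : Summable (fun n : ℕ => Cb x (n+1) * (((n:ℝ)+1) * z ^ n)) := by
      have := (summable_nat_add_iff 1).mpr S'
      refine this.congr fun n => ?_
      simp [Nat.add_sub_cancel]
    have hA1 : A = ∑' n : ℕ, (x - n) * Cb x n * z ^ n := by
      rw [hA, Summable.tsum_eq_zero_add S']
      simp only [Nat.cast_zero, zero_mul, mul_zero, zero_add, Nat.cast_add, Nat.cast_one,
        Nat.add_sub_cancel]
      apply tsum_congr
      intro n
      have := Cb_rec x n
      calc Cb x (n+1) * (((n:ℝ)+1) * z ^ n) = (((n:ℝ)+1) * Cb x (n+1)) * z ^ n := by ring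
        _ = (x - n) * Cb x n * z ^ n := by rw [this]
    have hS1 : Summable (fun n : ℕ => (x - n) * Cb x n * z ^ n) := by
      refine hshift.congr fun n => ?_
      have := Cb_rec x n
      calc Cb x (n+1) * (((n:ℝ)+1) * z ^ n) = (((n:ℝ)+1) * Cb x (n+1)) * z ^ n := by ring
        _ = (x - n) * Cb x n * z ^ n := by rw [this]
    have hA2 : z * A = ∑' n : ℕ, (n : ℝ) * Cb x n * z ^ n := by
      rw [hA, ← tsum_mul_left]
      apply tsum_congr
      intro n
      cases n with
      | zero => simp
      | succ m =>
        simp only [Nat.add_sub_cancel]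
        rw [pow_succ]
        push_cast
        ring
    have hS2 : Summable (fun n : ℕ => (n : ℝ) * Cb x n * z ^ n) := by
      refine (S'.mul_left z).congr fun n => ?_
      cases n with
      | zero => simp
      | succ m =>
        simp only [Nat.add_sub_cancel]
        rw [pow_succ]
        push_cast
        ring
    have : (1 + z) * A = A + z * A := by ring
    rw [this, hA2, hA1, ← Summable.tsum_add hS1 hS2]
    rw [hF, ← tsum_mul_left]
    apply tsum_congr
    intro n
    ring
  -- the auxiliary function F z * exp(-(x * log (1+z))) has zero derivative on the ball
  have hGderiv : ∀ z ∈ Metric.ball (0:ℝ) r,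
      HasDerivAt (fun w => F w * Real.exp (-(x * Real.log (1 + w)))) 0 z := by
    intro z hz
    have hz' : |z| < r := by simpa [Real.dist_eq] using hz
    have hz1 : |z| < 1 := lt_trans hz' hr1
    have h1z : (0:ℝ) < 1 + z := by
      have := abs_lt.mp hz1
      linarith [this.1]
    have h1z' : (1:ℝ) + z ≠ 0 := ne_of_gt h1z
    have hlog : HasDerivAt (fun w : ℝ => Real.log (1 + w)) ((1 + z)⁻¹) z := by
      have h := (Real.hasDerivAt_log h1z').comp z ((hasDerivAt_id z).const_add 1)
      simpa [Function.comp_def] using h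
    have hE : HasDerivAt (fun w : ℝ => Real.exp (-(x * Real.log (1 + w))))
        (Real.exp (-(x * Real.log (1 + z))) * (-(x * (1 + z)⁻¹))) z :=
      ((hlog.const_mul x).neg).exp
    have hF' := hderiv z hz
    have hode := hODE z hz1
    set A : ℝ := ∑' n : ℕ, Cb x n * ((n : ℝ) * z ^ (n - 1)) with hA
    have htot : HasDerivAt (fun w => F w * Real.exp (-(x * Real.log (1 + w))))
        (A * Real.exp (-(x * Real.log (1 + z))) + F z * (Real.exp (-(x * Real.log (1 + z))) * (-(x * (1 + z)⁻¹)))) z :=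
      hF'.mul hE
    convert htot using 1
    have hAval : A = x * F z / (1 + z) := by
      rw [eq_div_iff h1z']
      linarith [hode]
    rw [hAval]
    field_simp
    ring
  -- constancy along the segment from 0 to y
  have hconst : F y * Real.exp (-(x * Real.log (1 + y)))
      = F 0 * Real.exp (-(x * Real.log (1 + 0))) := by
    rcases le_or_gt 0 y with hy0 | hy0
    · have := constant_of_has_deriv_right_zero
        (f := fun w => F w * Real.exp (-(x * Real.log (1 + w)))) (a := 0) (b := y)
        (fun w hw => by
          have hwball : w ∈ Metric.ball (0:ℝ) r := by
            simp only [Metric.mem_ball, Real.dist_eq, sub_zero]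
            rw [abs_of_nonneg hw.1]
            exact lt_of_le_of_lt hw.2 (lt_of_abs_lt (by rwa [abs_of_nonneg hy0] at hyr ⊢))
          exact (hGderiv w hwball).continuousAt.continuousWithinAt)
        (fun w hw => by
          have hwball : w ∈ Metric.ball (0:ℝ) r := by
            simp only [Metric.mem_ball, Real.dist_eq, sub_zero]
            rw [abs_of_nonneg hw.1]
            calc w ≤ y := hw.2.le
              _ ≤ |y| := le_abs_self y
              _ < r := hyr
          exact ((hGderiv w hwball).hasDerivWithinAt))
      exact this y (Set.right_mem_Icc.mpr hy0)
    · have := constant_of_has_deriv_right_zero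
        (f := fun w => F w * Real.exp (-(x * Real.log (1 + w)))) (a := y) (b := 0)
        (fun w hw => by
          have hwball : w ∈ Metric.ball (0:ℝ) r := by
            simp only [Metric.mem_ball, Real.dist_eq, sub_zero]
            have : |w| ≤ |y| := by
              rw [abs_le]
              constructor
              · exact le_trans (neg_abs_le y) hw.1
              · linarith [hw.2, abs_nonneg y]
            exact lt_of_le_of_lt this hyr
          exact (hGderiv w hwball).continuousAt.continuousWithinAt)
        (fun w hw => by
          have hwball : w ∈ Metric.ball (0:ℝ) r := by
            simp only [Metric.mem_ball, Real.dist_eq, sub_zero]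
            have : |w| ≤ |y| := by
              rw [abs_le]
              constructor
              · exact le_trans (neg_abs_le y) hw.1
              · linarith [hw.2.le, abs_nonneg y]
            exact lt_of_le_of_lt this hyr
          exact ((hGderiv w hwball).hasDerivWithinAt))
      exact (this 0 (Set.right_mem_Icc.mpr hy0.le)).symm
  have hF0 : F 0 = 1 := by
    rw [show F 0 = ∑' n : ℕ, Cb x n * (0:ℝ) ^ n from rfl,
      tsum_eq_single 0 (fun n hn => by simp [zero_pow hn])]
    simp [Cb_zero]
  rw [hF0] at hconst
  simp only [add_zero, Real.log_one, mul_zero, neg_zero, Real.exp_zero, one_mul, mul_one]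
    at hconst
  have hFy : F y = Real.exp (x * Real.log (1 + y)) := by
    have hne : Real.exp (-(x * Real.log (1 + y))) ≠ 0 := Real.exp_ne_zero _
    have := hconst
    rw [Real.exp_neg] at this
    field_simp at this
    linarith [this]
  have hS : Summable (fun n : ℕ => Cb x n * y ^ n) := summable_Cb hx hy
  have := hS.hasSum
  rwa [show (∑' n : ℕ, Cb x n * y ^ n) = F y from rfl, hFy] at this

theorem gregory_generating_function (u : ℝ) (h1 : |u| < 1) (h2 : u ≠ 0) :
    u / Real.log (1 + u) = 1 + ∑' n : ℕ, G (n + 1) * u ^ (n + 1) := by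
  have h1u : (0:ℝ) < 1 + u := by
    have := abs_lt.mp h1
    linarith [this.1]
  set L : ℝ := Real.log (1 + u) with hLdef
  have hL : L ≠ 0 := by
    intro h
    rcases Real.log_eq_zero.mp h with h' | h' | h' <;> [linarith; exact h2 (by linarith); linarith]
  -- integrability of each term
  have hInt : ∀ n : ℕ, Integrable (fun x : ℝ => Cb x n * u ^ n)
      (volume.restrict (Set.Ioc (0:ℝ) 1)) := by
    intro n
    exact (((Cb_continuous n).mul continuous_const)).integrableOn_Ioc
  -- bound on the integral of norms
  have hBound : ∀ n : ℕ, (∫ x in Set.Ioc (0:ℝ) 1, ‖Cb x n * u ^ n‖) ≤ |u| ^ n := by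
    intro n
    have hmono : ∀ x ∈ Set.Ioc (0:ℝ) 1, ‖Cb x n * u ^ n‖ ≤ |u| ^ n := by
      intro x hx
      rw [Real.norm_eq_abs, abs_mul, abs_pow]
      calc |Cb x n| * |u| ^ n ≤ 1 * |u| ^ n :=
            mul_le_mul_of_nonneg_right
              (Cb_abs_le ⟨hx.1.le, hx.2⟩ n) (by positivity)
        _ = |u| ^ n := one_mul _
    calc (∫ x in Set.Ioc (0:ℝ) 1, ‖Cb x n * u ^ n‖)
        ≤ ∫ _x in Set.Ioc (0:ℝ) 1, |u| ^ n := by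
          apply setIntegral_mono_on (hInt n).norm (integrable_const _) measurableSet_Ioc hmono
      _ = |u| ^ n := by
          rw [setIntegral_const]
          simp [Real.volume_Ioc]
  have hSumInt : Summable (fun n : ℕ => ∫ x in Set.Ioc (0:ℝ) 1, ‖Cb x n * u ^ n‖) := by
    apply Summable.of_nonneg_of_le (fun n => integral_nonneg (fun x => norm_nonneg _)) hBound
    exact summable_geometric_of_lt_one (abs_nonneg u) h1
  have hswap := MeasureTheory.hasSum_integral_of_summable_integral_norm
      (μ := volume.restrict (Set.Ioc (0:ℝ) 1)) hInt hSumInt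
  -- identify the integrand sum with exp (x * L)
  have hpt : (∫ x in Set.Ioc (0:ℝ) 1, ∑' n : ℕ, Cb x n * u ^ n)
      = ∫ x in Set.Ioc (0:ℝ) 1, Real.exp (x * L) := by
    apply setIntegral_congr_fun measurableSet_Ioc
    intro x hx
    exact (key_hasSum ⟨hx.1.le, hx.2⟩ h1).tsum_eq
  -- identify each term integral with G n * u ^ n
  have hterm : ∀ n : ℕ, (∫ x in Set.Ioc (0:ℝ) 1, Cb x n * u ^ n) = G n * u ^ n := by
    intro n
    rw [← intervalIntegral.integral_of_le (zero_le_one)]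
    rw [intervalIntegral.integral_mul_const]
    congr 1
    rw [G]
    unfold Cb
    rw [intervalIntegral.integral_div]
    rw [div_eq_inv_mul]
  -- compute the exponential integral
  have hexp : (∫ x in Set.Ioc (0:ℝ) 1, Real.exp (x * L)) = u / L := by
    rw [← intervalIntegral.integral_of_le (zero_le_one)]
    have hD : ∀ t ∈ Set.uIcc (0:ℝ) 1,
        HasDerivAt (fun t : ℝ => Real.exp (t * L) / L) (Real.exp (t * L)) t := by
      intro t _
      have h : HasDerivAt (fun t : ℝ => Real.exp (t * L) / L) (Real.exp (t * L) * (1 * L) / L) t :=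
        ((hasDerivAt_id t).mul_const L).exp.div_const L
      convert h using 1
      field_simp
    have hI : IntervalIntegrable (fun t : ℝ => Real.exp (t * L)) volume 0 1 :=
      (Real.continuous_exp.comp (continuous_id.mul continuous_const)).intervalIntegrable 0 1
    rw [intervalIntegral.integral_eq_sub_of_hasDerivAt hD hI]
    rw [one_mul, zero_mul, Real.exp_zero, hLdef, Real.exp_log h1u]
    ring
  rw [hpt, hexp] at hswap
  have hfun : (fun n : ℕ => ∫ x in Set.Ioc (0:ℝ) 1, Cb x n * u ^ n)
      = fun n : ℕ => G n * u ^ n := funext hterm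
  rw [hfun] at hswap
  have hG0 : G 0 = 1 := by
    simp [G]
  rw [← hswap.tsum_eq, Summable.tsum_eq_zero_add hswap.summable, hG0]
  simp
end

section
/- For every n ≥ 1, the sign of G_n is (-1)^{n-1}; that is, G_n = (-1)^{n-1} |G_n| and G_n ≠ 0. -/
open MeasureTheory

theorem gregory_sign (n : ℕ) (hn : 1 ≤ n) :
    G n = (-1 : ℝ) ^ (n - 1) * |G n| ∧ G n ≠ 0 := by
  have hcont : Continuous fun x : ℝ => (-1 : ℝ) ^ (n - 1) *
      ∏ k ∈ Finset.range n, (x - k) := by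
    apply Continuous.mul continuous_const
    exact continuous_finset_prod _ fun k _ => continuous_id.sub continuous_const
  have hpos : 0 < ∫ x in (0:ℝ)..1,
      (-1 : ℝ) ^ (n - 1) * ∏ k ∈ Finset.range n, (x - k) := by
    apply intervalIntegral.intervalIntegral_pos_of_pos_on
      (hcont.intervalIntegrable 0 1)
    · intro x hx
      obtain ⟨hx0, hx1⟩ := hx
      have key : (-1 : ℝ) ^ (n - 1) * ∏ k ∈ Finset.range n, (x - k)
          = x * ∏ k ∈ Finset.range (n - 1), ((k : ℝ) + 1 - x) := by
        obtain ⟨m, rfl⟩ := Nat.exists_eq_add_of_le hn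
        simp only [Nat.add_sub_cancel_left, add_comm 1 m]
        rw [Finset.prod_range_succ']
        have : ∀ k ∈ Finset.range m, (x - ((k : ℕ) + 1 : ℕ))
            = (-1) * (((k : ℝ) + 1) - x) := by intro k _; push_cast; ring
        rw [Finset.prod_congr rfl this]
        simp only [Finset.prod_mul_distrib, Finset.prod_const, Finset.card_range,
          Nat.add_sub_cancel, Nat.cast_zero, sub_zero]
        have hsq : ((-1:ℝ))^m * (-1)^m = 1 := by
          rw [← pow_add, ← two_mul, pow_mul, neg_one_sq, one_pow]
        calc (-1:ℝ) ^ m * (((-1) ^ m * ∏ k ∈ Finset.range m, ((k:ℝ) + 1 - x)) * x)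
            = ((-1:ℝ)^m * (-1)^m) * (x * ∏ k ∈ Finset.range m, ((k:ℝ) + 1 - x)) := by
              ring
          _ = x * ∏ k ∈ Finset.range m, ((k:ℝ) + 1 - x) := by rw [hsq, one_mul]
      rw [key]
      apply mul_pos hx0
      apply Finset.prod_pos
      intro k _
      have : (0:ℝ) ≤ k := Nat.cast_nonneg k
      linarith
    · norm_num
  rw [intervalIntegral.integral_const_mul] at hpos
  have hfact : (0:ℝ) < ((n.factorial : ℝ))⁻¹ := by positivity
  have hG : 0 < (-1 : ℝ) ^ (n - 1) * G n := by
    unfold G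
    have := mul_pos hfact hpos
    calc (0:ℝ) < (n.factorial : ℝ)⁻¹ * ((-1:ℝ)^(n-1) *
        ∫ x in (0:ℝ)..1, ∏ k ∈ Finset.range n, (x - k)) := this
      _ = _ := by ring
  have hne : G n ≠ 0 := by
    intro h
    rw [h, mul_zero] at hG
    exact lt_irrefl 0 hG
  refine ⟨?_, hne⟩
  have habs : |G n| = (-1 : ℝ) ^ (n - 1) * G n := by
    rw [← abs_of_pos hG, abs_mul, abs_pow, abs_neg, abs_one, one_pow, one_mul]
  rw [habs, ← mul_assoc, ← pow_add, ← two_mul, pow_mul, neg_one_sq, one_pow, one_mul]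
end

section
/- The sequence |G_n| is strictly decreasing: for all n ≥ 1, |G_{n+1}| < |G_n|. -/
open MeasureTheory

private lemma P_cont (n : ℕ) : Continuous (fun x : ℝ => ∏ k ∈ Finset.range n, (x - (k:ℝ))) := by
  exact continuous_finset_prod _ fun k _ => continuous_id.sub continuous_const

private lemma Q_nonneg (n : ℕ) (hn : 1 ≤ n) : ∀ x ∈ Set.Icc (0:ℝ) 1,
    0 ≤ (-1:ℝ)^(n+1) * ∏ k ∈ Finset.range n, (x - (k:ℝ)) := by
  induction n with
  | zero => omega
  | succ m ih =>
    intro x hx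
    rcases Nat.lt_or_ge m 1 with hm | hm
    · interval_cases m
      simpa using hx.1
    · rw [Finset.prod_range_succ]
      have h1 : ((-1:ℝ))^(m+1+1) * ((∏ k ∈ Finset.range m, (x - (k:ℝ))) * (x - m))
          = ((-1:ℝ)^(m+1) * ∏ k ∈ Finset.range m, (x - (k:ℝ))) * ((m:ℝ) - x) := by
        ring
      rw [h1]
      apply mul_nonneg (ih hm x hx)
      have : x ≤ 1 := hx.2
      have hm1 : (1:ℝ) ≤ m := by exact_mod_cast hm
      linarith

private lemma Q_half_pos (n : ℕ) (hn : 1 ≤ n) :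
    0 < (-1:ℝ)^(n+1) * ∏ k ∈ Finset.range n, ((1:ℝ)/2 - (k:ℝ)) := by
  have hne : (∏ k ∈ Finset.range n, ((1:ℝ)/2 - (k:ℝ))) ≠ 0 := by
    apply Finset.prod_ne_zero_iff.2
    intro k _
    intro h
    have : (1:ℝ)/2 = (k:ℝ) := by linarith
    rcases Nat.lt_or_ge k 1 with hk | hk
    · interval_cases k; norm_num at this
    · have : (1:ℝ) ≤ (k:ℝ) := by exact_mod_cast hk
      linarith
  have h0 := Q_nonneg n hn (1/2) (by norm_num)
  have : (-1:ℝ)^(n+1) * ∏ k ∈ Finset.range n, ((1:ℝ)/2 - (k:ℝ)) ≠ 0 := by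
    apply mul_ne_zero _ hne
    positivity
  exact lt_of_le_of_ne h0 (Ne.symm this)

private lemma absG (n : ℕ) (hn : 1 ≤ n) :
    |G n| = (n.factorial : ℝ)⁻¹ *
      ∫ x in (0:ℝ)..1, (-1:ℝ)^(n+1) * ∏ k ∈ Finset.range n, (x - (k:ℝ)) := by
  have hint : (∫ x in (0:ℝ)..1, (-1:ℝ)^(n+1) * ∏ k ∈ Finset.range n, (x - (k:ℝ)))
      = (-1:ℝ)^(n+1) * ∫ x in (0:ℝ)..1, ∏ k ∈ Finset.range n, (x - (k:ℝ)) :=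
    intervalIntegral.integral_const_mul _ _
  have hnonneg : 0 ≤ ∫ x in (0:ℝ)..1, (-1:ℝ)^(n+1) * ∏ k ∈ Finset.range n, (x - (k:ℝ)) := by
    apply intervalIntegral.integral_nonneg (by norm_num)
    intro x hx
    exact Q_nonneg n hn x hx
  rw [G, abs_mul]
  congr 1
  · rw [abs_of_nonneg]; positivity
  · rw [← abs_of_nonneg hnonneg, hint, abs_mul, abs_pow, abs_neg, abs_one, one_pow, one_mul]

theorem gregory_abs_strict_anti (n : ℕ) (hn : 1 ≤ n) :
    |G (n + 1)| < |G n| := by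
  rw [absG n hn, absG (n+1) (by omega)]
  set I := ∫ x in (0:ℝ)..1, (-1:ℝ)^(n+1) * ∏ k ∈ Finset.range n, (x - (k:ℝ)) with hI
  have key : (∫ x in (0:ℝ)..1, (-1:ℝ)^(n+1+1) * ∏ k ∈ Finset.range (n+1), (x - (k:ℝ)))
      < ((n:ℝ)+1) * I := by
    have heq : ∀ x : ℝ, (-1:ℝ)^(n+1+1) * ∏ k ∈ Finset.range (n+1), (x - (k:ℝ))
        = ((-1:ℝ)^(n+1) * ∏ k ∈ Finset.range n, (x - (k:ℝ))) * ((n:ℝ) - x) := by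
      intro x
      rw [Finset.prod_range_succ]
      ring
    have hrhs : ((n:ℝ)+1) * I
        = ∫ x in (0:ℝ)..1, ((-1:ℝ)^(n+1) * ∏ k ∈ Finset.range n, (x - (k:ℝ))) * ((n:ℝ)+1) := by
      rw [hI, ← intervalIntegral.integral_const_mul]
      congr 1; ext x; ring
    rw [hrhs]
    simp_rw [heq]
    apply intervalIntegral.integral_lt_integral_of_continuousOn_of_le_of_exists_lt
      (by norm_num)
    · exact (((continuous_const.mul (P_cont n)).mul
        (continuous_const.sub continuous_id)).continuousOn)
    · exact (((continuous_const.mul (P_cont n)).mul continuous_const).continuousOn)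
    · intro x hx
      have h1 : 0 ≤ (-1:ℝ)^(n+1) * ∏ k ∈ Finset.range n, (x - (k:ℝ)) :=
        Q_nonneg n hn x ⟨le_of_lt hx.1, hx.2⟩
      have h2 : (n:ℝ) - x ≤ (n:ℝ) + 1 := by linarith [hx.1]
      exact mul_le_mul_of_nonneg_left h2 h1
    · refine ⟨1/2, by norm_num, ?_⟩
      have := Q_half_pos n hn
      have h2 : (n:ℝ) - 1/2 < (n:ℝ) + 1 := by linarith
      exact mul_lt_mul_of_pos_left h2 this
  have hfac : ((n+1).factorial : ℝ)⁻¹ * (((n:ℝ)+1) * I) = (n.factorial : ℝ)⁻¹ * I := by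
    rw [Nat.factorial_succ]
    push_cast
    have h1 : ((n:ℝ)+1) ≠ 0 := by positivity
    have h2 : (n.factorial : ℝ) ≠ 0 := by positivity
    field_simp
  rw [← hfac]
  have hpos : (0:ℝ) < (((n+1).factorial : ℝ))⁻¹ := by positivity
  exact mul_lt_mul_of_pos_left key hpos
end

section
/- Schröder's integral representation: for every n ≥ 1, G_n = (-1)^{n+1} ∫_0^∞ du / ((log² u + π²)(u+1)^n). -/
open MeasureTheory Real

lemma exp_sin_int (a : ℝ) :
    ∫ x in (0:ℝ)..1, Real.exp (a*x) * Real.sin (π*x)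
      = π * (Real.exp a + 1) / (a^2 + π^2) := by
  have hc : a^2 + π^2 ≠ 0 := by positivity
  have key : ∀ x : ℝ, HasDerivAt
      (fun y => Real.exp (a*y) * (a * Real.sin (π*y) - π * Real.cos (π*y)) / (a^2+π^2))
      (Real.exp (a*x) * Real.sin (π*x)) x := by
    intro x
    have h1 : HasDerivAt (fun y => Real.exp (a*y)) (a * Real.exp (a*x)) x := by
      simpa [mul_comm] using ((hasDerivAt_id x).const_mul a).exp
    have h2 : HasDerivAt (fun y => Real.sin (π*y)) (π * Real.cos (π*x)) x := by
      simpa [mul_comm] using ((hasDerivAt_id x).const_mul π).sin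
    have h3 : HasDerivAt (fun y => Real.cos (π*y)) (-(π * Real.sin (π*x))) x := by
      simpa [mul_comm, mul_assoc] using ((hasDerivAt_id x).const_mul π).cos
    have h4 : HasDerivAt (fun y => a * Real.sin (π*y) - π * Real.cos (π*y))
        (a * (π * Real.cos (π*x)) - π * -(π * Real.sin (π*x))) x :=
      (h2.const_mul a).sub (h3.const_mul π)
    have h5 := (h1.mul h4).div_const (a^2+π^2)
    refine h5.congr_deriv ?_
    field_simp
    ring
  rw [intervalIntegral.integral_eq_sub_of_hasDerivAt (fun x _ => key x)
    (by apply Continuous.intervalIntegrable; continuity)]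
  simp [Real.sin_pi, Real.cos_pi]
  field_simp
  ring

lemma inner_int {t : ℝ} (ht : t ∈ Set.Ioo (0:ℝ) 1) (n : ℕ) :
    (π)⁻¹ * ∫ x in (0:ℝ)..1, Real.sin (π*x) * t^x * (1-t)^((n:ℝ)-1-x)
      = ((1-t)^2)⁻¹ * (1 / (((Real.log (t/(1-t)))^2 + π^2) * (t/(1-t)+1)^n)) := by
  obtain ⟨ht0, ht1⟩ := ht
  have h1t : (0:ℝ) < 1 - t := by linarith
  set L : ℝ := Real.log t - Real.log (1-t) with hL
  have hlog : Real.log (t/(1-t)) = L := Real.log_div ht0.ne' h1t.ne'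
  have hu1 : t/(1-t) + 1 = (1-t)⁻¹ := by field_simp; ring
  have hint : ∀ x : ℝ, Real.sin (π*x) * t^x * (1-t)^((n:ℝ)-1-x)
      = (1-t)^((n:ℝ)-1) * (Real.exp (L*x) * Real.sin (π*x)) := by
    intro x
    rw [Real.rpow_def_of_pos ht0, Real.rpow_def_of_pos h1t, Real.rpow_def_of_pos h1t]
    have : Real.exp (Real.log t * x) * Real.exp (Real.log (1-t) * ((n:ℝ)-1-x))
        = Real.exp (Real.log (1-t) * ((n:ℝ)-1)) * Real.exp (L*x) := by
      rw [← Real.exp_add, ← Real.exp_add]; congr 1; rw [hL]; ring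
    rw [mul_assoc, this]; ring
  rw [intervalIntegral.integral_congr (fun x _ => hint x),
    intervalIntegral.integral_const_mul, exp_sin_int L]
  have heL : Real.exp L = t * (1-t)⁻¹ := by
    rw [hL, Real.exp_sub, Real.exp_log ht0, Real.exp_log h1t]; rfl
  have heL1 : Real.exp L + 1 = (1-t)⁻¹ := by
    rw [heL]; field_simp; ring
  rw [heL1, hlog, hu1]
  rw [show (1-t)^((n:ℝ)-1) = (1-t)^(n:ℝ) * (1-t)⁻¹ by
    rw [show ((n:ℝ)-1) = (n:ℝ) + (-1) from sub_eq_add_neg _ _, Real.rpow_add h1t, Real.rpow_neg_one]]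
  rw [Real.rpow_natCast]
  have hD : L^2 + π^2 ≠ 0 := by positivity
  have h1tn : (1-t)^n ≠ 0 := pow_ne_zero _ h1t.ne'
  field_simp
  ring_nf
  rw [inv_pow, inv_mul_cancel₀ h1tn]

lemma beta_ptwise {x : ℝ} (hx0 : 0 < x) (n : ℕ) {t : ℝ} (ht0 : 0 ≤ t) (ht1 : t ≤ 1) :
    (t:ℂ)^((x:ℂ)+1-1) * ((1:ℂ)-t)^((n:ℂ)-x-1)
      = ((t^x * (1-t)^((n:ℝ)-1-x) : ℝ) : ℂ) := by
  have h1 : ((x:ℂ)+1-1) = ((x:ℝ):ℂ) := by ring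
  have h2 : ((n:ℂ)-x-1) = (((n:ℝ)-1-x : ℝ):ℂ) := by push_cast; ring
  have h3 : ((1:ℂ)-t) = (((1-t:ℝ)):ℂ) := by push_cast; ring
  rw [h1, h2, h3, ← Complex.ofReal_cpow ht0, ← Complex.ofReal_cpow (by linarith : (0:ℝ) ≤ 1-t)]
  push_cast; ring

lemma beta_val {x : ℝ} (hx : x ∈ Set.Ioo (0:ℝ) 1) {n : ℕ} (hn : 1 ≤ n) :
    ∫ t in (0:ℝ)..1, t^x * (1-t)^((n:ℝ)-1-x)
      = Real.Gamma (x+1) * Real.Gamma ((n:ℝ)-x) / n.factorial := by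
  obtain ⟨hx0, hx1⟩ := hx
  have hre1 : 0 < Complex.re ((x:ℂ)+1) := by simp; linarith
  have hre2 : 0 < Complex.re ((n:ℂ)-x) := by
    simp [Complex.sub_re]
    have : (1:ℝ) ≤ n := by exact_mod_cast hn
    linarith
  have key := Complex.Gamma_mul_Gamma_eq_betaIntegral hre1 hre2
  have hbeta : Complex.betaIntegral ((x:ℂ)+1) ((n:ℂ)-x)
      = ((∫ t in (0:ℝ)..1, t^x * (1-t)^((n:ℝ)-1-x) : ℝ) : ℂ) := by
    rw [Complex.betaIntegral, ← intervalIntegral.integral_ofReal]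
    refine intervalIntegral.integral_congr fun t ht => ?_
    rw [Set.uIcc_of_le (by norm_num : (0:ℝ) ≤ 1)] at ht
    exact beta_ptwise hx0 n ht.1 ht.2
  rw [hbeta] at key
  rw [show ((x:ℂ)+1+((n:ℂ)-x)) = ((n:ℕ):ℂ)+1 by ring, Complex.Gamma_nat_eq_factorial] at key
  rw [show ((x:ℂ)+1) = (((x+1:ℝ)):ℂ) by push_cast; ring, Complex.Gamma_ofReal] at key
  rw [show ((n:ℂ)-(x:ℂ)) = ((((n:ℝ)-x:ℝ)):ℂ) by push_cast; ring, Complex.Gamma_ofReal] at key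
  have keyR : Real.Gamma (x+1) * Real.Gamma ((n:ℝ)-x)
      = (n.factorial : ℝ) * ∫ t in (0:ℝ)..1, t^x * (1-t)^((n:ℝ)-1-x) := by
    exact_mod_cast key
  have hfac : (n.factorial : ℝ) ≠ 0 := by positivity
  field_simp [keyR]
  rw [keyR]; ring

lemma beta_integrable {x : ℝ} (hx : x ∈ Set.Ioo (0:ℝ) 1) {n : ℕ} (hn : 1 ≤ n) :
    IntegrableOn (fun t => t^x * (1-t)^((n:ℝ)-1-x)) (Set.Ioo (0:ℝ) 1) := by
  obtain ⟨hx0, hx1⟩ := hx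
  have hre1 : 0 < Complex.re ((x:ℂ)+1) := by simp; linarith
  have hre2 : 0 < Complex.re ((n:ℂ)-x) := by
    simp [Complex.sub_re]
    have : (1:ℝ) ≤ n := by exact_mod_cast hn
    linarith
  have hc := Complex.betaIntegral_convergent hre1 hre2
  rw [intervalIntegrable_iff_integrableOn_Ioo_of_le (by norm_num : (0:ℝ) ≤ 1)] at hc
  refine hc.re.congr ?_
  refine (ae_restrict_iff' measurableSet_Ioo).2 (Filter.Eventually.of_forall fun t ht => ?_)
  show RCLike.re ((t:ℂ)^((x:ℂ)+1-1) * ((1:ℂ)-t)^((n:ℂ)-x-1)) = _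
  rw [beta_ptwise hx0 n ht.1.le ht.2.le]
  simp

lemma gamma_prod {x : ℝ} (hx : x ∈ Set.Ioo (0:ℝ) 1) {n : ℕ} (hn : 1 ≤ n) :
    Real.sin (π*x) * (Real.Gamma (x+1) * Real.Gamma ((n:ℝ)-x))
      = π * ((-1:ℝ)^(n+1) * ∏ k ∈ Finset.range n, (x - (k:ℝ))) := by
  obtain ⟨hx0, hx1⟩ := hx
  have hsin : Real.sin (π*x) ≠ 0 := by
    refine (Real.sin_pos_of_pos_of_lt_pi ?_ ?_).ne'
    · positivity
    · nlinarith [Real.pi_pos]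
  induction n with
  | zero => omega
  | succ m ih =>
    rcases Nat.lt_or_ge m 1 with hm | hm
    · interval_cases m
      have hrefl2 : Real.Gamma x * Real.Gamma (1-x) * Real.sin (π*x) = π := by
        rw [Real.Gamma_mul_Gamma_one_sub x]; field_simp
      push_cast
      rw [Real.Gamma_add_one hx0.ne']
      simp [Finset.prod_range_one]
      linear_combination x * hrefl2
    · have ihm := ih hm
      have hmx : (m:ℝ) - x ≠ 0 := by
        have : (1:ℝ) ≤ m := by exact_mod_cast hm
        linarith
      rw [show (((m+1:ℕ)):ℝ) - x = ((m:ℝ)-x)+1 by push_cast; ring,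
        Real.Gamma_add_one hmx, Finset.prod_range_succ]
      rw [show ((-1:ℝ)^(m+1+1)) = (-1:ℝ)^(m+1) * (-1) by ring]
      nlinarith [ihm]

lemma subst_Ioi (g : ℝ → ℝ) :
    ∫ u in Set.Ioi (0:ℝ), g u = ∫ t in Set.Ioo (0:ℝ) 1, ((1-t)^2)⁻¹ * g (t/(1-t)) := by
  have himg : (fun t : ℝ => t/(1-t)) '' Set.Ioo 0 1 = Set.Ioi 0 := by
    ext u
    simp only [Set.mem_image, Set.mem_Ioo, Set.mem_Ioi]
    constructor
    · rintro ⟨t, ⟨ht0, ht1⟩, rfl⟩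
      exact div_pos ht0 (by linarith)
    · intro hu
      refine ⟨u/(1+u), ⟨div_pos hu (by linarith), ?_⟩, ?_⟩
      · rw [div_lt_one (by linarith)]; linarith
      · field_simp; ring
  have hderiv : ∀ t ∈ Set.Ioo (0:ℝ) 1,
      HasDerivWithinAt (fun t : ℝ => t/(1-t)) (((1-t)^2)⁻¹) (Set.Ioo 0 1) t := by
    intro t ht
    have h1t : (1:ℝ) - t ≠ 0 := by have := ht.2; intro h; simp at *; linarith
    have := (hasDerivAt_id t).div ((hasDerivAt_id t).const_sub 1) h1t
    refine HasDerivAt.hasDerivWithinAt ?_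
    refine this.congr_deriv ?_
    simp only [id_eq]
    ring
  have hinj : Set.InjOn (fun t : ℝ => t/(1-t)) (Set.Ioo 0 1) := by
    intro a ha b hb h
    have h1a : (1:ℝ) - a ≠ 0 := by have := ha.2; intro hh; simp at *; linarith
    have h1b : (1:ℝ) - b ≠ 0 := by have := hb.2; intro hh; simp at *; linarith
    field_simp at h
    linarith
  rw [← himg, MeasureTheory.integral_image_eq_integral_abs_deriv_smul measurableSet_Ioo hderiv hinj]
  refine setIntegral_congr_fun measurableSet_Ioo fun t ht => ?_
  have h1t : (0:ℝ) < 1 - t := by linarith [ht.2]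
  rw [smul_eq_mul, abs_of_pos (by positivity)]

theorem schroder_integral (n : ℕ) (hn : 1 ≤ n) :
    G n = (-1 : ℝ) ^ (n + 1) *
      ∫ u in Set.Ioi (0:ℝ), 1 / (((Real.log u) ^ 2 + π ^ 2) * (u + 1) ^ n) := by
  have hπ : (0:ℝ) < π := Real.pi_pos
  set F : ℝ → ℝ → ℝ := fun t x => Real.sin (π*x) * t^x * (1-t)^((n:ℝ)-1-x) with hF
  -- step 1 : substitution + inner identity
  have step1 : (∫ u in Set.Ioi (0:ℝ), 1 / (((Real.log u)^2 + π^2) * (u+1)^n))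
      = π⁻¹ * ∫ t in Set.Ioo (0:ℝ) 1, ∫ x in Set.Ioo (0:ℝ) 1, F t x := by
    rw [subst_Ioi (fun u => 1 / (((Real.log u)^2 + π^2) * (u+1)^n)),
      ← MeasureTheory.integral_const_mul]
    refine setIntegral_congr_fun measurableSet_Ioo fun t ht => ?_
    rw [← inner_int ht n]
    congr 1
    rw [intervalIntegral.integral_of_le zero_le_one, MeasureTheory.integral_Ioc_eq_integral_Ioo]
  -- value of the inner t-integral
  have hval : ∀ x ∈ Set.Ioo (0:ℝ) 1, (∫ t in Set.Ioo (0:ℝ) 1, F t x)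
      = π * ((-1:ℝ)^(n+1) * ∏ k ∈ Finset.range n, (x - (k:ℝ))) / n.factorial := by
    intro x hx
    have : (∫ t in Set.Ioo (0:ℝ) 1, F t x)
        = Real.sin (π*x) * ∫ t in Set.Ioo (0:ℝ) 1, t^x * (1-t)^((n:ℝ)-1-x) := by
      rw [← MeasureTheory.integral_const_mul]
      refine setIntegral_congr_fun measurableSet_Ioo fun t ht => ?_
      simp only [hF]; ring
    rw [this, ← MeasureTheory.integral_Ioc_eq_integral_Ioo,
      ← intervalIntegral.integral_of_le zero_le_one, beta_val hx hn]
    rw [mul_div_assoc'] at *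
    rw [show Real.sin (π*x) * (Real.Gamma (x+1) * Real.Gamma ((n:ℝ)-x))
      = π * ((-1:ℝ)^(n+1) * ∏ k ∈ Finset.range n, (x - (k:ℝ))) from gamma_prod hx hn]
  -- nonnegativity of F on the square
  have hFnn : ∀ x ∈ Set.Ioo (0:ℝ) 1, ∀ t ∈ Set.Ioo (0:ℝ) 1, 0 ≤ F t x := by
    intro x hx t ht
    have h1 : 0 ≤ Real.sin (π*x) := by
      refine Real.sin_nonneg_of_nonneg_of_le_pi (by nlinarith [hx.1, hπ]) (by nlinarith [hx.2, hπ])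
    have h2 : (0:ℝ) < t^x := Real.rpow_pos_of_pos ht.1 _
    have h3 : (0:ℝ) < (1-t)^((n:ℝ)-1-x) := Real.rpow_pos_of_pos (by linarith [ht.2]) _
    exact mul_nonneg (mul_nonneg h1 h2.le) h3.le
  -- integrability of uncurried F on the product
  have hInt : Integrable (Function.uncurry F)
      ((volume.restrict (Set.Ioo (0:ℝ) 1)).prod (volume.restrict (Set.Ioo (0:ℝ) 1))) := by
    have hmeas : AEStronglyMeasurable (Function.uncurry F)
        ((volume.restrict (Set.Ioo (0:ℝ) 1)).prod (volume.restrict (Set.Ioo (0:ℝ) 1))) := by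
      rw [Measure.prod_restrict]
      refine ContinuousOn.aestronglyMeasurable ?_ (measurableSet_Ioo.prod measurableSet_Ioo)
      intro p hp
      have hp1 := (Set.mem_prod.1 hp).1
      have hp2 := (Set.mem_prod.1 hp).2
      have h1 : ContinuousAt (fun p : ℝ×ℝ => p.1 ^ p.2) p :=
        Real.continuousAt_rpow p (Or.inl hp1.1.ne')
      have h2 : ContinuousAt (fun p : ℝ×ℝ => (1-p.1) ^ ((n:ℝ)-1-p.2)) p := by
        have hin : ContinuousAt (fun p : ℝ×ℝ => ((1-p.1), ((n:ℝ)-1-p.2))) p := by fun_prop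
        have h1p : (1 - p.1) ≠ 0 := by have := hp1.2; intro hh; linarith
        exact (Real.continuousAt_rpow _ (Or.inl h1p)).comp hin
      have h3 : ContinuousAt (fun p : ℝ×ℝ => Real.sin (π*p.2)) p := by fun_prop
      exact ((h3.mul h1).mul h2).continuousWithinAt
    refine (integrable_prod_iff' hmeas).2 ⟨?_, ?_⟩
    · refine (ae_restrict_iff' measurableSet_Ioo).2 (Filter.Eventually.of_forall fun x hx => ?_)
      have := (beta_integrable hx hn).const_mul (Real.sin (π*x))
      refine this.congr (Filter.Eventually.of_forall fun t => ?_)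
      simp only [Function.uncurry_apply_pair, hF]
      ring
    · have hP : Integrable
          (fun x : ℝ => π * ((-1:ℝ)^(n+1) * ∏ k ∈ Finset.range n, (x - (k:ℝ))) / n.factorial)
          (volume.restrict (Set.Ioo (0:ℝ) 1)) := by
        have hc : Continuous (fun x : ℝ =>
            π * ((-1:ℝ)^(n+1) * ∏ k ∈ Finset.range n, (x - (k:ℝ))) / n.factorial) := by fun_prop
        exact (hc.integrableOn_Icc (a := (0:ℝ)) (b := 1)).mono_set Set.Ioo_subset_Icc_self
      refine hP.congr ?_
      refine (ae_restrict_iff' measurableSet_Ioo).2 (Filter.Eventually.of_forall fun x hx => ?_)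
      have h1 : (∫ t in Set.Ioo (0:ℝ) 1, ‖Function.uncurry F (t, x)‖)
          = ∫ t in Set.Ioo (0:ℝ) 1, F t x :=
        setIntegral_congr_fun measurableSet_Ioo fun t ht => Real.norm_of_nonneg (hFnn x hx t ht)
      show π * ((-1:ℝ)^(n+1) * ∏ k ∈ Finset.range n, (x - (k:ℝ))) / n.factorial
          = ∫ t in Set.Ioo (0:ℝ) 1, ‖Function.uncurry F (t, x)‖
      rw [h1, hval x hx]
  have hswap := MeasureTheory.integral_integral_swap hInt
  rw [step1, hswap]
  rw [setIntegral_congr_fun measurableSet_Ioo hval]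
  have hpull : (∫ x in Set.Ioo (0:ℝ) 1,
      π * ((-1:ℝ)^(n+1) * ∏ k ∈ Finset.range n, (x - (k:ℝ))) / n.factorial)
      = (π * (-1:ℝ)^(n+1) / n.factorial) * ∫ x in Set.Ioo (0:ℝ) 1,
        ∏ k ∈ Finset.range n, (x - (k:ℝ)) := by
    rw [← MeasureTheory.integral_const_mul]
    refine setIntegral_congr_fun measurableSet_Ioo fun x hx => ?_
    ring
  rw [hpull]
  rw [G, intervalIntegral.integral_of_le zero_le_one, MeasureTheory.integral_Ioc_eq_integral_Ioo]
  have hsq : ((-1:ℝ)^(n+1)) * ((-1:ℝ)^(n+1)) = 1 := by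
    rw [← pow_add]
    exact Even.neg_one_pow ⟨n+1, by ring⟩
  have hπ' : π⁻¹ * π = 1 := inv_mul_cancel₀ hπ.ne'
  rw [show ((-1:ℝ)^(n+1) * (π⁻¹ * (π * (-1:ℝ)^(n+1) / (n.factorial:ℝ) *
      ∫ x in Set.Ioo (0:ℝ) 1, ∏ k ∈ Finset.range n, (x - (k:ℝ)))))
    = ((-1:ℝ)^(n+1)*(-1:ℝ)^(n+1)) * ((π⁻¹*π) * ((n.factorial:ℝ)⁻¹ *
      ∫ x in Set.Ioo (0:ℝ) 1, ∏ k ∈ Finset.range n, (x - (k:ℝ)))) by ring, hsq, hπ',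
    one_mul, one_mul]
end

section
/- Schröder's first-order asymptotics: |G_n| ~ 1/(n log² n) as n → ∞; that is, lim_{n→∞} n (log n)² |G_n| = 1. -/
open MeasureTheory Filter

open Finset

lemma sq_sum_le_aux (m : ℕ) (hm : 0 < m) : ∑ k ∈ range m, ((k+1:ℝ))⁻¹^2 ≤ 2 - (m:ℝ)⁻¹ := by
  induction m with
  | zero => norm_num
  | succ p ihp =>
    rcases Nat.eq_zero_or_pos p with hp | hp
    · subst hp; norm_num
    · have hp0 : (0:ℝ) < p := by exact_mod_cast hp
      rw [Finset.sum_range_succ]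
      have h1 := ihp hp
      have key : ((p+1:ℝ))⁻¹^2 ≤ (p:ℝ)⁻¹ - ((p:ℝ)+1)⁻¹ := by
        rw [inv_sub_inv (by positivity) (by positivity), inv_pow, inv_eq_one_div,
          div_le_div_iff₀ (by positivity) (by positivity)]
        nlinarith [sq_nonneg ((p:ℝ))]
      push_cast at h1 key ⊢
      linarith

lemma sq_sum_le (n : ℕ) : ∑ k ∈ range n, ((k+1:ℝ))⁻¹^2 ≤ 2 := by
  rcases Nat.eq_zero_or_pos n with hn | hn
  · subst hn; norm_num
  · have := sq_sum_le_aux n hn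
    have : (0:ℝ) < n := by exact_mod_cast hn
    have h2 : (0:ℝ) ≤ (n:ℝ)⁻¹ := by positivity
    linarith [sq_sum_le_aux n hn]

lemma harmonic_le (n : ℕ) : ∑ k ∈ range n, ((k+1:ℝ))⁻¹ ≤ Real.log n + 1 := by
  induction n with
  | zero => simp
  | succ m ih =>
    rcases Nat.eq_zero_or_pos m with hm | hm
    · subst hm; norm_num
    · rw [Finset.sum_range_succ]
      have hm0 : (0:ℝ) < m := by exact_mod_cast hm
      have key : ((m:ℝ)+1)⁻¹ ≤ Real.log (m+1) - Real.log m := by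
        have h := Real.log_le_sub_one_of_pos (x := (m:ℝ)/((m:ℝ)+1)) (by positivity)
        rw [Real.log_div (by positivity) (by positivity)] at h
        have h2 : (m:ℝ)/((m:ℝ)+1) - 1 = -((m:ℝ)+1)⁻¹ := by field_simp; ring
        linarith [h2 ▸ h]
      push_cast
      linarith



lemma factor_upper (k : ℕ) {x : ℝ} (hx0 : 0 ≤ x) :
    1 - x * ((k:ℝ)+1)⁻¹ ≤ (((k:ℝ)+1)/((k:ℝ)+2)) ^ x := by
  have hb : (0:ℝ) < ((k:ℝ)+1)/((k:ℝ)+2) := by positivity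
  rw [Real.rpow_def_of_pos hb]
  have h1 : Real.log (((k:ℝ)+1)/((k:ℝ)+2)) ≥ -((k:ℝ)+1)⁻¹ := by
    have h := Real.log_le_sub_one_of_pos (x := ((k:ℝ)+2)/((k:ℝ)+1)) (by positivity)
    rw [Real.log_div (by positivity) (by positivity)] at h ⊢
    have h2 : ((k:ℝ)+2)/((k:ℝ)+1) - 1 = ((k:ℝ)+1)⁻¹ := by
      rw [div_sub_one (by positivity), inv_eq_one_div]
      norm_num
    rw [h2] at h
    linarith
  have h2 : Real.log (((k:ℝ)+1)/((k:ℝ)+2)) * x + 1 ≤ Real.exp (Real.log (((k:ℝ)+1)/((k:ℝ)+2)) * x) :=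
    Real.add_one_le_exp _
  nlinarith [mul_le_mul_of_nonneg_right h1 hx0]

lemma factor_lower (k : ℕ) {x : ℝ} (hx0 : 0 ≤ x) (hx : x ≤ 1/2) :
    Real.exp (-(x * ((k:ℝ)+1)⁻¹) - 2 * (x * ((k:ℝ)+1)⁻¹)^2) ≤ 1 - x * ((k:ℝ)+1)⁻¹ := by
  set u : ℝ := x * ((k:ℝ)+1)⁻¹ with hu
  have hk0 : (0:ℝ) ≤ k := Nat.cast_nonneg k
  have hinv1 : ((k:ℝ)+1)⁻¹ ≤ 1 := by
    rw [inv_le_one_iff₀]; right; linarith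
  have hu0 : 0 ≤ u := mul_nonneg hx0 (by positivity)
  have hu2 : u ≤ 1/2 := by
    have := mul_le_mul_of_nonneg_left hinv1 hx0
    rw [mul_one] at this
    exact le_trans this hx
  have h1u : (0:ℝ) < 1 - u := by linarith
  have hlog : -Real.log (1 - u) ≤ u + 2*u^2 := by
    have h := Real.log_le_sub_one_of_pos (x := (1-u)⁻¹) (by positivity)
    rw [Real.log_inv] at h
    have h2 : (1-u)⁻¹ - 1 = u / (1-u) := by field_simp; ring
    rw [h2] at h
    have h3 : u / (1-u) ≤ u + 2*u^2 := by
      rw [div_le_iff₀ h1u]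
      nlinarith
    linarith
  calc Real.exp (-u - 2*u^2) ≤ Real.exp (Real.log (1-u)) := by
        apply Real.exp_le_exp.2; linarith
    _ = 1 - u := Real.exp_log h1u

lemma tel_prod (n : ℕ) : ∏ k ∈ range n, (((k:ℝ)+1)/((k:ℝ)+2)) = ((n:ℝ)+1)⁻¹ := by
  induction n with
  | zero => simp
  | succ m ih =>
    rw [Finset.prod_range_succ, ih]
    push_cast
    have h1 : ((m:ℝ)+1) ≠ 0 := by positivity
    have h2 : ((m:ℝ)+2) ≠ 0 := by positivity
    field_simp
    ring

lemma Q_upper (n : ℕ) {x : ℝ} (hx0 : 0 ≤ x) (hx1 : x ≤ 1) :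
    ∏ k ∈ range n, (1 - x * ((k:ℝ)+1)⁻¹) ≤ Real.exp (-Real.log (n+1) * x) := by
  have step : ∏ k ∈ range n, (1 - x * ((k:ℝ)+1)⁻¹)
      ≤ ∏ k ∈ range n, (((k:ℝ)+1)/((k:ℝ)+2)) ^ x := by
    apply Finset.prod_le_prod
    · intro k _
      have hk0 : (0:ℝ) ≤ k := Nat.cast_nonneg k
      have hinv1 : ((k:ℝ)+1)⁻¹ ≤ 1 := by rw [inv_le_one_iff₀]; right; linarith
      have := mul_le_mul hx1 hinv1 (by positivity) zero_le_one
      rw [one_mul] at this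
      linarith
    · intro k _; exact factor_upper k hx0
  rw [Real.finset_prod_rpow _ _ (fun k _ => by positivity) x, tel_prod n] at step
  rw [Real.rpow_def_of_pos (by positivity), Real.log_inv] at step
  refine step.trans_eq ?_
  rw [neg_mul]

lemma Q_lower (n : ℕ) {x : ℝ} (hx0 : 0 ≤ x) (hx : x ≤ 1/2) :
    Real.exp (-(Real.log n + 1) * x) * (1 - 4*x^2)
      ≤ ∏ k ∈ range n, (1 - x * ((k:ℝ)+1)⁻¹) := by
  have step1 : ∏ k ∈ range n, Real.exp (-(x * ((k:ℝ)+1)⁻¹) - 2 * (x * ((k:ℝ)+1)⁻¹)^2)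
      ≤ ∏ k ∈ range n, (1 - x * ((k:ℝ)+1)⁻¹) := by
    apply Finset.prod_le_prod
    · intro k _; positivity
    · intro k _; exact factor_lower k hx0 hx
  rw [← Real.exp_sum] at step1
  have hsum : ∑ k ∈ range n, (-(x * ((k:ℝ)+1)⁻¹) - 2 * (x * ((k:ℝ)+1)⁻¹)^2)
      = -(x * ∑ k ∈ range n, ((k:ℝ)+1)⁻¹) - 2 * x^2 * ∑ k ∈ range n, ((k:ℝ)+1)⁻¹^2 := by
    rw [Finset.mul_sum, Finset.mul_sum, ← Finset.sum_neg_distrib, ← Finset.sum_sub_distrib]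
    apply Finset.sum_congr rfl
    intro k _; ring
  rw [hsum] at step1
  refine le_trans ?_ step1
  have hS := harmonic_le n
  have hT := sq_sum_le n
  have e1 : Real.exp (-(Real.log n + 1) * x) * (1 - 4*x^2)
      ≤ Real.exp (-(Real.log n + 1) * x) * Real.exp (-(4*x^2)) := by
    apply mul_le_mul_of_nonneg_left _ (Real.exp_nonneg _)
    linarith [Real.add_one_le_exp (-(4*x^2))]
  refine e1.trans ?_
  rw [← Real.exp_add]
  apply Real.exp_le_exp.2
  have h1 : x * ∑ k ∈ range n, ((k:ℝ)+1)⁻¹ ≤ x * (Real.log n + 1) :=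
    mul_le_mul_of_nonneg_left hS hx0
  have h2 : 2 * x^2 * ∑ k ∈ range n, ((k:ℝ)+1)⁻¹^2 ≤ 2 * x^2 * 2 :=
    mul_le_mul_of_nonneg_left hT (by positivity)
  nlinarith [h1, h2]



lemma Q_nonneg_s12 (n : ℕ) {x : ℝ} (hx0 : 0 ≤ x) (hx1 : x ≤ 1) :
    0 ≤ ∏ k ∈ range n, (1 - x * ((k:ℝ)+1)⁻¹) := by
  apply Finset.prod_nonneg
  intro k _
  have hk0 : (0:ℝ) ≤ k := Nat.cast_nonneg k
  have hinv1 : ((k:ℝ)+1)⁻¹ ≤ 1 := by rw [inv_le_one_iff₀]; right; linarith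
  have := mul_le_mul hx1 hinv1 (by positivity) zero_le_one
  rw [one_mul] at this
  linarith

lemma prod_eq (n : ℕ) (x : ℝ) :
    ∏ k ∈ Finset.range (n+1), (x - (k:ℕ)) =
      (-1)^n * (n.factorial : ℝ) * (x * ∏ k ∈ range n, (1 - x * ((k:ℝ)+1)⁻¹)) := by
  rw [Finset.prod_range_succ']
  have e : ∀ k ∈ range n, (x - ((k+1:ℕ):ℝ)) = (-1) * (((k:ℝ)+1) * (1 - x * ((k:ℝ)+1)⁻¹)) := by
    intro k _
    have h : ((k:ℝ)+1) ≠ 0 := by positivity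
    push_cast
    field_simp
    ring
  have hf : ∏ k ∈ range n, ((k:ℝ)+1) = (n.factorial : ℝ) := by
    have e2 : ∀ k ∈ range n, ((k:ℝ)+1) = ((k+1 : ℕ) : ℝ) := by
      intro k _; push_cast; ring
    rw [Finset.prod_congr rfl e2, ← Nat.cast_prod,
      Finset.prod_range_add_one_eq_factorial]
  rw [Finset.prod_congr rfl e, Finset.prod_mul_distrib, Finset.prod_mul_distrib,
    Finset.prod_const, Finset.card_range, hf, Nat.cast_zero, sub_zero]
  ring

lemma abs_G (n : ℕ) :
    ((n:ℝ)+1) * |G (n+1)| = ∫ x in (0:ℝ)..1, x * ∏ k ∈ range n, (1 - x * ((k:ℝ)+1)⁻¹) := by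
  have hint : (∫ x in (0:ℝ)..1, ∏ k ∈ Finset.range (n+1), (x - (k:ℕ)))
      = (-1)^n * (n.factorial : ℝ) * ∫ x in (0:ℝ)..1, x * ∏ k ∈ range n, (1 - x * ((k:ℝ)+1)⁻¹) := by
    rw [← intervalIntegral.integral_const_mul]
    apply intervalIntegral.integral_congr
    intro x _
    exact prod_eq n x
  have hI : 0 ≤ ∫ x in (0:ℝ)..1, x * ∏ k ∈ range n, (1 - x * ((k:ℝ)+1)⁻¹) := by
    apply intervalIntegral.integral_nonneg (by norm_num)
    intro x hx
    exact mul_nonneg hx.1 (Q_nonneg_s12 n hx.1 hx.2)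
  rw [G, hint, abs_mul, abs_mul, abs_mul, abs_pow, abs_neg, abs_one, one_pow, one_mul,
    abs_inv, Nat.abs_cast, Nat.abs_cast, abs_of_nonneg hI]
  rw [Nat.factorial_succ]
  push_cast
  rw [mul_inv]
  have h1 : ((n:ℝ)+1) ≠ 0 := by positivity
  have h2 : ((n.factorial : ℝ)) ≠ 0 := by positivity
  field_simp

lemma hasDerivAt_expneg (M x : ℝ) :
    HasDerivAt (fun y => Real.exp (-(M*y))) (-M * Real.exp (-(M*x))) x := by
  have h : HasDerivAt (fun y : ℝ => -(M*y)) (-M) x := by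
    exact (((hasDerivAt_id x).const_mul M).neg).congr_deriv (by simp)
  simpa [mul_comm] using h.exp

lemma integral_x_exp (M : ℝ) (hM : 0 < M) (b : ℝ) :
    ∫ x in (0:ℝ)..b, x * Real.exp (-(M*x))
      = 1/M^2 - (b/M + 1/M^2) * Real.exp (-(M*b)) := by
  have hM' : M ≠ 0 := ne_of_gt hM
  have hF : ∀ x : ℝ, HasDerivAt (fun y => -(y/M + 1/M^2) * Real.exp (-(M*y)))
      (x * Real.exp (-(M*x))) x := by
    intro x
    have hpoly : HasDerivAt (fun y : ℝ => -(y/M + 1/M^2)) (-(1/M)) x := by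
      exact (((hasDerivAt_id x).div_const M).add_const (1/M^2)).neg
    have := hpoly.mul (hasDerivAt_expneg M x)
    refine this.congr_deriv ?_
    field_simp
    ring
  rw [intervalIntegral.integral_eq_sub_of_hasDerivAt (fun x _ => hF x)
    ((Continuous.mul continuous_id (by continuity)).intervalIntegrable _ _)]
  simp [Real.exp_zero]
  ring

lemma integral_x3_exp_le (M : ℝ) (hM : 0 < M) :
    ∫ x in (0:ℝ)..(1/2), x^3 * Real.exp (-(M*x)) ≤ 6/M^4 := by
  have hM' : M ≠ 0 := ne_of_gt hM
  set F : ℝ → ℝ := fun y => -(y^3/M + 3*y^2/M^2 + 6*y/M^3 + 6/M^4) * Real.exp (-(M*y)) with hFdef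
  have hF : ∀ x : ℝ, HasDerivAt F (x^3 * Real.exp (-(M*x))) x := by
    intro x
    have hpoly : HasDerivAt (fun y : ℝ => -(y^3/M + 3*y^2/M^2 + 6*y/M^3 + 6/M^4))
        (-(3*x^2/M + 6*x/M^2 + 6/M^3)) x := by
      have h1 : HasDerivAt (fun y : ℝ => y^3/M + 3*y^2/M^2 + 6*y/M^3 + 6/M^4)
          (3*x^2/M + 6*x/M^2 + 6/M^3) x := by
        have a1 := (hasDerivAt_pow 3 x).div_const M
        have a2 := ((hasDerivAt_pow 2 x).const_mul (3:ℝ)).div_const (M^2)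
        have a3 := ((hasDerivAt_id x).const_mul (6:ℝ)).div_const (M^3)
        have := ((a1.add a2).add a3).add_const (6/M^4)
        refine this.congr_deriv ?_
        push_cast
        ring
      exact h1.neg
    have := hpoly.mul (hasDerivAt_expneg M x)
    refine this.congr_deriv ?_
    field_simp
    ring
  have : ∫ x in (0:ℝ)..(1/2), x^3 * Real.exp (-(M*x)) = F (1/2) - F 0 := by
    apply intervalIntegral.integral_eq_sub_of_hasDerivAt (fun x _ => hF x)
    exact ((continuous_pow 3).mul (by continuity)).intervalIntegrable _ _
  rw [this]
  have hF0 : F 0 = -(6/M^4) := by simp [hFdef]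
  have hFhalf : F (1/2) ≤ 0 := by
    rw [hFdef]
    simp only
    apply mul_nonpos_of_nonpos_of_nonneg
    · have : (0:ℝ) ≤ (1/2:ℝ)^3/M + 3*(1/2:ℝ)^2/M^2 + 6*(1/2:ℝ)/M^3 + 6/M^4 := by positivity
      linarith
    · exact Real.exp_nonneg _
  rw [hF0]
  linarith

noncomputable def phi (L : ℝ) : ℝ :=
  L^2 * (1/(L+1)^2 - ((1/2)/(L+1) + 1/(L+1)^2) * Real.exp (-((L+1)*(1/2))) - 24/(L+1)^4)

lemma exp_decay : Tendsto (fun L : ℝ => 4*((L/2)^2 * Real.exp (-(L/2)))) atTop (nhds 0) := by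
  have h1 : Tendsto (fun y : ℝ => y^2 * Real.exp (-y)) atTop (nhds 0) :=
    Real.tendsto_pow_mul_exp_neg_atTop_nhds_zero 2
  have h2 : Tendsto (fun L : ℝ => L/2) atTop atTop :=
    tendsto_id.atTop_div_const (by norm_num)
  have := (h1.comp h2).const_mul (4:ℝ)
  simpa using this

lemma inv_add_one_tendsto : Tendsto (fun L : ℝ => 1/(L+1)) atTop (nhds 0) := by
  have := tendsto_inv_atTop_zero.comp (tendsto_atTop_add_const_right atTop (1:ℝ) tendsto_id)
  simpa [one_div, Function.comp_def] using this

lemma t1_tendsto : Tendsto (fun L : ℝ => L^2 * (1/(L+1)^2)) atTop (nhds 1) := by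
  have hs : Tendsto (fun L : ℝ => 1 - 1/(L+1)) atTop (nhds (1 - 0)) :=
    tendsto_const_nhds.sub inv_add_one_tendsto
  have h : Tendsto (fun L : ℝ => (1 - 1/(L+1))^2) atTop (nhds 1) := by
    have := hs.pow 2
    norm_num at this
    simpa [one_div] using this
  apply h.congr'
  filter_upwards [eventually_ge_atTop (0:ℝ)] with L hL
  have h1 : L + 1 ≠ 0 := by positivity
  field_simp
  ring

lemma t2_tendsto :
    Tendsto (fun L : ℝ => L^2 * (((1/2)/(L+1) + 1/(L+1)^2) * Real.exp (-((L+1)*(1/2)))))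
      atTop (nhds 0) := by
  apply tendsto_of_tendsto_of_tendsto_of_le_of_le' tendsto_const_nhds exp_decay
  · filter_upwards [eventually_ge_atTop (0:ℝ)] with L hL
    have h1 : (0:ℝ) < L + 1 := by linarith
    positivity
  · filter_upwards [eventually_ge_atTop (1:ℝ)] with L hL
    have h1 : (0:ℝ) < L + 1 := by linarith
    have hc : (1/2)/(L+1) + 1/(L+1)^2 ≤ 1 := by
      have e1 : (1/2)/(L+1) ≤ 1/2 := by
        rw [div_le_iff₀ h1]; nlinarith
      have e2 : 1/(L+1)^2 ≤ 1/2 := by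
        rw [div_le_iff₀ (by positivity)]; nlinarith
      linarith
    have hexp : Real.exp (-((L+1)*(1/2))) ≤ Real.exp (-(L/2)) := by
      apply Real.exp_le_exp.2; linarith
    have hc0 : (0:ℝ) ≤ (1/2)/(L+1) + 1/(L+1)^2 := by positivity
    calc L^2 * (((1/2)/(L+1) + 1/(L+1)^2) * Real.exp (-((L+1)*(1/2))))
        ≤ L^2 * (1 * Real.exp (-(L/2))) := by
          apply mul_le_mul_of_nonneg_left _ (by positivity)
          exact mul_le_mul hc hexp (Real.exp_nonneg _) zero_le_one
      _ = 4*((L/2)^2 * Real.exp (-(L/2))) := by ring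

lemma t3_tendsto : Tendsto (fun L : ℝ => L^2 * (24/(L+1)^4)) atTop (nhds 0) := by
  have h24 : Tendsto (fun L : ℝ => 24*(1/(L+1))^2) atTop (nhds 0) := by
    have := (inv_add_one_tendsto.pow 2).const_mul (24:ℝ)
    simpa using this
  apply tendsto_of_tendsto_of_tendsto_of_le_of_le' tendsto_const_nhds h24
  · filter_upwards [eventually_ge_atTop (0:ℝ)] with L hL
    have h1 : (0:ℝ) < L + 1 := by linarith
    positivity
  · filter_upwards [eventually_ge_atTop (1:ℝ)] with L hL
    have h1 : (0:ℝ) < L + 1 := by linarith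
    have key : L^2/(L+1)^4 ≤ 1/(L+1)^2 := by
      rw [div_le_div_iff₀ (by positivity) (by positivity)]
      nlinarith [sq_nonneg (L+1), sq_nonneg L]
    calc L^2 * (24/(L+1)^4) = 24*(L^2/(L+1)^4) := by ring
      _ ≤ 24*(1/(L+1)^2) := by
          apply mul_le_mul_of_nonneg_left key (by norm_num)
      _ = 24*(1/(L+1))^2 := by rw [div_pow, one_pow]

lemma phi_tendsto : Tendsto phi atTop (nhds 1) := by
  have h := (t1_tendsto.sub t2_tendsto).sub t3_tendsto
  rw [sub_zero, sub_zero] at h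
  apply h.congr
  intro L
  unfold phi
  ring







lemma cont_Q (m : ℕ) :
    Continuous (fun x : ℝ => x * ∏ k ∈ range m, (1 - x*((k:ℝ)+1)⁻¹)) :=
  continuous_id.mul (continuous_finset_prod _ fun k _ => by continuity)

lemma log_ge_one {n : ℕ} (hn : 3 ≤ n) : 1 ≤ Real.log n := by
  have h3 : (3:ℝ) ≤ n := by exact_mod_cast hn
  rw [Real.le_log_iff_exp_le (by linarith)]
  calc Real.exp 1 ≤ 2.7182818286 := Real.exp_one_lt_d9.le
    _ ≤ 3 := by norm_num
    _ ≤ n := h3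

lemma key_upper {n : ℕ} (hn : 3 ≤ n) : (n:ℝ) * (Real.log n)^2 * |G n| ≤ 1 := by
  obtain ⟨m, rfl⟩ := Nat.exists_eq_succ_of_ne_zero (show n ≠ 0 by omega)
  set L : ℝ := Real.log (m+1:ℕ) with hLdef
  have hL1 : 1 ≤ L := log_ge_one hn
  have hL0 : 0 < L := lt_of_lt_of_le one_pos hL1
  have hcast : ((m+1:ℕ):ℝ) = (m:ℝ)+1 := by push_cast; ring
  have hI : ((m:ℝ)+1) * |G (m+1)| ≤ 1/L^2 - (1/L + 1/L^2) * Real.exp (-(L*1)) := by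
    rw [abs_G m]
    rw [← integral_x_exp L hL0 1]
    apply intervalIntegral.integral_mono_on (by norm_num)
      ((cont_Q m).intervalIntegrable _ _)
      ((by continuity : Continuous fun x : ℝ => x * Real.exp (-(L*x))).intervalIntegrable _ _)
    intro x hx
    have := Q_upper m hx.1 hx.2
    have hxq : x * ∏ k ∈ range m, (1 - x*((k:ℝ)+1)⁻¹) ≤ x * Real.exp (-Real.log ((m:ℝ)+1) * x) :=
      mul_le_mul_of_nonneg_left this hx.1
    refine hxq.trans_eq ?_
    rw [neg_mul, hLdef, hcast]
  have hexp0 : (0:ℝ) ≤ Real.exp (-(L*1)) := Real.exp_nonneg _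
  have hsq : L^2 * (1/L^2) = 1 := by field_simp
  have hGn : 0 ≤ |G (m+1)| := abs_nonneg _
  calc ((m+1:ℕ):ℝ) * L^2 * |G (m+1)| = L^2 * (((m:ℝ)+1) * |G (m+1)|) := by
        rw [hcast]; ring
    _ ≤ L^2 * (1/L^2 - (1/L + 1/L^2) * Real.exp (-(L*1))) := by
        apply mul_le_mul_of_nonneg_left hI (by positivity)
    _ ≤ 1 := by
        have hco : (0:ℝ) ≤ (1/L + 1/L^2) * Real.exp (-(L*1)) := by positivity
        nlinarith [mul_le_mul_of_nonneg_left hco (le_of_lt (mul_pos hL0 hL0))]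

lemma key_lower {n : ℕ} (hn : 3 ≤ n) : phi (Real.log n) ≤ (n:ℝ) * (Real.log n)^2 * |G n| := by
  obtain ⟨m, rfl⟩ := Nat.exists_eq_succ_of_ne_zero (show n ≠ 0 by omega)
  set L : ℝ := Real.log (m+1:ℕ) with hLdef
  set M : ℝ := L + 1 with hMdef
  have hL1 : 1 ≤ L := log_ge_one hn
  have hL0 : 0 < L := lt_of_lt_of_le one_pos hL1
  have hM0 : 0 < M := by rw [hMdef]; linarith
  have hcast : ((m+1:ℕ):ℝ) = (m:ℝ)+1 := by push_cast; ring
  -- lower bound the integrand on [0, 1/2]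
  have hpt : ∀ x ∈ Set.Icc (0:ℝ) (1/2),
      x * Real.exp (-(M*x)) - 4*(x^3 * Real.exp (-(M*x)))
        ≤ x * ∏ k ∈ range m, (1 - x*((k:ℝ)+1)⁻¹) := by
    intro x hx
    have hx0 := hx.1
    have hx2 := hx.2
    have hlogm : Real.log m ≤ L := by
      have hm2 : 2 ≤ m := by omega
      have hm0 : (0:ℝ) < m := by exact_mod_cast Nat.lt_of_lt_of_le two_pos hm2
      rw [hLdef]
      have hle : (m:ℝ) ≤ ((m+1:ℕ):ℝ) := by push_cast; linarith
      gcongr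
    have hexpmono : Real.exp (-(M*x)) ≤ Real.exp (-(Real.log m + 1) * x) := by
      apply Real.exp_le_exp.2
      rw [neg_mul]
      apply neg_le_neg
      apply mul_le_mul_of_nonneg_right _ hx0
      rw [hMdef]; linarith
    have h4x : (0:ℝ) ≤ 1 - 4*x^2 := by nlinarith
    have step : Real.exp (-(M*x)) * (1 - 4*x^2)
        ≤ ∏ k ∈ range m, (1 - x*((k:ℝ)+1)⁻¹) := by
      refine le_trans ?_ (Q_lower m hx0 hx2)
      exact mul_le_mul_of_nonneg_right hexpmono h4x
    have := mul_le_mul_of_nonneg_left step hx0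
    calc x * Real.exp (-(M*x)) - 4*(x^3 * Real.exp (-(M*x)))
        = x * (Real.exp (-(M*x)) * (1 - 4*x^2)) := by ring
      _ ≤ x * ∏ k ∈ range m, (1 - x*((k:ℝ)+1)⁻¹) := this
  -- integral over [0,1/2] bound
  have hint1 : IntervalIntegrable (fun x : ℝ => x * Real.exp (-(M*x)) - 4*(x^3 * Real.exp (-(M*x)))) volume 0 (1/2) := by
    apply Continuous.intervalIntegrable
    continuity
  have hIQhalf : (∫ x in (0:ℝ)..(1/2), x * Real.exp (-(M*x)) - 4*(x^3 * Real.exp (-(M*x))))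
      ≤ ∫ x in (0:ℝ)..(1/2), x * ∏ k ∈ range m, (1 - x*((k:ℝ)+1)⁻¹) := by
    apply intervalIntegral.integral_mono_on (by norm_num) hint1
      ((cont_Q m).intervalIntegrable _ _) hpt
  -- compute the LHS integral
  have hIeval : (∫ x in (0:ℝ)..(1/2), x * Real.exp (-(M*x)) - 4*(x^3 * Real.exp (-(M*x))))
      ≥ 1/M^2 - ((1/2)/M + 1/M^2) * Real.exp (-(M*(1/2))) - 24/M^4 := by
    rw [intervalIntegral.integral_sub
      ((by continuity : Continuous fun x : ℝ => x * Real.exp (-(M*x))).intervalIntegrable _ _)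
      (((by continuity : Continuous fun x : ℝ => x^3 * Real.exp (-(M*x))).intervalIntegrable _ _).const_mul 4)]
    rw [intervalIntegral.integral_const_mul, integral_x_exp M hM0 (1/2)]
    have := integral_x3_exp_le M hM0
    have h4 : 4 * ∫ x in (0:ℝ)..(1/2), x^3 * Real.exp (-(M*x)) ≤ 24/M^4 := by
      calc 4 * ∫ x in (0:ℝ)..(1/2), x^3 * Real.exp (-(M*x)) ≤ 4 * (6/M^4) := by linarith
        _ = 24/M^4 := by ring
    linarith
  -- splitting [0,1] = [0,1/2] ∪ [1/2,1]
  have hsplit : (∫ x in (0:ℝ)..(1/2), x * ∏ k ∈ range m, (1 - x*((k:ℝ)+1)⁻¹))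
      ≤ ∫ x in (0:ℝ)..1, x * ∏ k ∈ range m, (1 - x*((k:ℝ)+1)⁻¹) := by
    rw [← intervalIntegral.integral_add_adjacent_intervals
      ((cont_Q m).intervalIntegrable (0:ℝ) (1/2))
      ((cont_Q m).intervalIntegrable (1/2) 1)]
    have hpos : 0 ≤ ∫ x in (1/2:ℝ)..1, x * ∏ k ∈ range m, (1 - x*((k:ℝ)+1)⁻¹) := by
      apply intervalIntegral.integral_nonneg (by norm_num)
      intro x hx
      exact mul_nonneg (le_trans (by norm_num) hx.1)
        (Q_nonneg_s12 m (le_trans (by norm_num) hx.1) hx.2)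
    linarith
  have hI : 1/M^2 - ((1/2)/M + 1/M^2) * Real.exp (-(M*(1/2))) - 24/M^4
      ≤ ((m:ℝ)+1) * |G (m+1)| := by
    rw [abs_G m]
    linarith
  calc phi L = L^2 * (1/M^2 - ((1/2)/M + 1/M^2) * Real.exp (-(M*(1/2))) - 24/M^4) := by
        rw [phi, hMdef]
    _ ≤ L^2 * (((m:ℝ)+1) * |G (m+1)|) := mul_le_mul_of_nonneg_left hI (by positivity)
    _ = ((m+1:ℕ):ℝ) * L^2 * |G (m+1)| := by rw [hcast]; ring

theorem gregory_first_order_asymptotics :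
    Tendsto (fun n : ℕ => (n : ℝ) * (Real.log n) ^ 2 * |G n|) atTop (nhds 1) := by
  apply tendsto_of_tendsto_of_tendsto_of_le_of_le'
    (g := fun n : ℕ => phi (Real.log n)) (h := fun _ : ℕ => (1:ℝ))
  · exact phi_tendsto.comp (Real.tendsto_log_atTop.comp tendsto_natCast_atTop_atTop)
  · exact tendsto_const_nhds
  · filter_upwards [eventually_ge_atTop 3] with n hn
    exact key_lower hn
  · filter_upwards [eventually_ge_atTop 3] with n hn
    exact key_upper hn
end

section
/- Lower bound: for every n ≥ 2, |G_n| ≥ ∫_1^2 du/((log² u + π²)(u+1)^n) ≥ (1/((log 2)² + π²)) · (1/(n-1)) · (2^{1-n} − 3^{1-n}). -/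
open MeasureTheory Real

lemma prod_pointwise (m : ℕ) (x : ℝ) (hx0 : 0 ≤ x) (hx1 : x ≤ 1) :
    x * (1 - x) * (m.factorial : ℝ) ≤ (-1:ℝ)^(m+1) * ∏ k ∈ Finset.range (m+2), (x - k) := by
  have h1 : ∏ k ∈ Finset.range (m+2), (x - (k:ℝ)) =
      (∏ k ∈ Finset.range (m+1), (x - ((k:ℝ)+1))) * x := by
    rw [Finset.prod_range_succ']
    push_cast
    norm_num
  have h2 : ∏ k ∈ Finset.range (m+1), ((k:ℝ)+1-x) =
      (-1:ℝ)^(m+1) * ∏ k ∈ Finset.range (m+1), (x - ((k:ℝ)+1)) := by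
    have : (-1:ℝ)^(m+1) = ∏ _k ∈ Finset.range (m+1), (-1:ℝ) := by
      rw [Finset.prod_const, Finset.card_range]
    rw [this, ← Finset.prod_mul_distrib]
    exact Finset.prod_congr rfl fun k _ => by ring
  have h3 : (1-x) * (m.factorial : ℝ) ≤ ∏ k ∈ Finset.range (m+1), ((k:ℝ)+1-x) := by
    rw [Finset.prod_range_succ']
    push_cast
    have : (m.factorial : ℝ) ≤ ∏ k ∈ Finset.range m, ((k:ℝ)+1+1-x) := by
      have := Finset.prod_range_add_one_eq_factorial m
      have hcast : (m.factorial : ℝ) = ∏ k ∈ Finset.range m, ((k:ℝ)+1) := by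
        rw [← this]; push_cast; exact Finset.prod_congr rfl fun k _ => by ring
      rw [hcast]
      apply Finset.prod_le_prod
      · intro k _; positivity
      · intro k _; linarith
    calc (1-x) * (m.factorial:ℝ) ≤ (∏ k ∈ Finset.range m, ((k:ℝ)+1+1-x)) * (1-x) := by
          rw [mul_comm]
          exact mul_le_mul_of_nonneg_right this (by linarith)
      _ = (∏ k ∈ Finset.range m, ((k:ℝ)+1+1-x)) * (0+1-x) := by norm_num
  calc x * (1-x) * (m.factorial:ℝ)
      ≤ x * ∏ k ∈ Finset.range (m+1), ((k:ℝ)+1-x) := by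
        rw [mul_assoc]
        exact mul_le_mul_of_nonneg_left h3 hx0
    _ = (-1:ℝ)^(m+1) * ∏ k ∈ Finset.range (m+2), (x - k) := by
        rw [h1, h2]; ring

lemma G_lb (n : ℕ) (hn : 2 ≤ n) : 1 / (6 * (n:ℝ) * ((n:ℝ) - 1)) ≤ |G n| := by
  obtain ⟨m, rfl⟩ : ∃ m, n = m + 2 := ⟨n - 2, by omega⟩
  have hcont : Continuous fun x : ℝ => ∏ k ∈ Finset.range (m+2), (x - (k:ℝ)) := by
    apply continuous_finset_prod
    intro k _
    exact continuous_id.sub continuous_const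
  have hint : IntervalIntegrable (fun x : ℝ => ∏ k ∈ Finset.range (m+2), (x - (k:ℝ)))
      volume 0 1 := hcont.intervalIntegrable _ _
  have hlow : IntervalIntegrable (fun x : ℝ => x * (1 - x) * (m.factorial : ℝ))
      volume 0 1 := (Continuous.intervalIntegrable (by continuity) _ _)
  have hmono : ∫ x in (0:ℝ)..1, x * (1 - x) * (m.factorial : ℝ) ≤
      ∫ x in (0:ℝ)..1, (-1:ℝ)^(m+1) * ∏ k ∈ Finset.range (m+2), (x - (k:ℝ)) := by
    apply intervalIntegral.integral_mono_on (by norm_num) hlow (hint.const_mul _)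
    intro x hx
    exact prod_pointwise m x hx.1 hx.2
  have hval : ∫ x in (0:ℝ)..1, x * (1 - x) * (m.factorial : ℝ)
      = (m.factorial : ℝ) / 6 := by
    have : ∀ x : ℝ, x * (1 - x) * (m.factorial : ℝ)
        = (m.factorial : ℝ) * x - (m.factorial : ℝ) * x ^ 2 := by intro x; ring
    simp_rw [this]
    rw [intervalIntegral.integral_sub ((Continuous.intervalIntegrable (by continuity) _ _))
      ((Continuous.intervalIntegrable (by continuity) _ _)),
      intervalIntegral.integral_const_mul, intervalIntegral.integral_const_mul,
      integral_id, integral_pow]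
    norm_num; ring
  have habs : (m.factorial : ℝ) / 6 ≤ |∫ x in (0:ℝ)..1, ∏ k ∈ Finset.range (m+2), (x - (k:ℝ))| := by
    rw [intervalIntegral.integral_const_mul] at hmono
    rw [hval] at hmono
    rcases neg_one_pow_eq_or ℝ (m+1) with h | h
    · rw [h, one_mul] at hmono
      exact hmono.trans (le_abs_self _)
    · rw [h] at hmono
      calc (m.factorial:ℝ)/6 ≤ -1 * ∫ x in (0:ℝ)..1, ∏ k ∈ Finset.range (m+2), (x - (k:ℝ)) := hmono
        _ = -(∫ x in (0:ℝ)..1, ∏ k ∈ Finset.range (m+2), (x - (k:ℝ))) := by ring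
        _ ≤ |∫ x in (0:ℝ)..1, ∏ k ∈ Finset.range (m+2), (x - (k:ℝ))| := neg_le_abs _
  unfold G
  rw [abs_mul, abs_inv, Nat.abs_cast]
  have hfac : ((m+2).factorial : ℝ) = ((m:ℝ)+2) * ((m:ℝ)+1) * (m.factorial : ℝ) := by
    rw [show m + 2 = (m+1) + 1 from rfl, Nat.factorial_succ, Nat.factorial_succ]
    push_cast; ring
  have hfpos : (0:ℝ) < (m.factorial : ℝ) := by positivity
  have heq : (((m+2).factorial : ℝ))⁻¹ * ((m.factorial:ℝ)/6)
      = 1/(6*((m:ℝ)+2)*((m:ℝ)+1)) := by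
    rw [hfac]; field_simp
  calc (1:ℝ) / (6 * ((m+2:ℕ):ℝ) * (((m+2:ℕ):ℝ) - 1))
      ≤ (((m+2).factorial : ℝ))⁻¹ * ((m.factorial : ℝ) / 6) := by
        rw [heq]; apply le_of_eq; push_cast; ring_nf
    _ ≤ (((m+2).factorial : ℝ))⁻¹ * |∫ x in (0:ℝ)..1, ∏ k ∈ Finset.range (m+2), (x - (k:ℝ))| := by
        apply mul_le_mul_of_nonneg_left habs (by positivity)


lemma nat_pow_aux (m : ℕ) : (m+3)*(m+2) ≤ 2^(m+3) := by
  induction m with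
  | zero => norm_num
  | succ k ih =>
      calc (k+1+3)*(k+1+2) ≤ 2*((k+3)*(k+2)) := by nlinarith
        _ ≤ 2*2^(k+3) := by omega
        _ = 2^(k+1+3) := by ring

lemma nat_pow (n : ℕ) (hn : 2 ≤ n) : (n:ℝ) * ((n:ℝ)-1) ≤ 2^n := by
  match n, hn with
  | 2, _ => norm_num
  | (m+3), _ =>
      have := nat_pow_aux m
      have h : ((m:ℝ)+3)*((m:ℝ)+2) ≤ 2^(m+3) := by exact_mod_cast this
      push_cast
      nlinarith [h]

lemma cont_denom (n : ℕ) : ContinuousOn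
    (fun u : ℝ => ((Real.log u) ^ 2 + π ^ 2) * (u + 1) ^ n) (Set.uIcc 1 2) := by
  apply ContinuousOn.mul
  · apply ContinuousOn.add
    · apply ContinuousOn.pow
      apply Real.continuousOn_log.mono
      intro u hu
      rw [Set.uIcc_of_le (by norm_num : (1:ℝ) ≤ 2)] at hu
      simp only [Set.mem_compl_iff, Set.mem_singleton_iff]
      intro h; rw [h] at hu; exact absurd hu.1 (by norm_num)
    · exact continuousOn_const
  · exact ((continuous_id.add continuous_const).pow n).continuousOn

lemma denom_pos (n : ℕ) (u : ℝ) (hu : u ∈ Set.uIcc (1:ℝ) 2) :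
    0 < ((Real.log u) ^ 2 + π ^ 2) * (u + 1) ^ n := by
  rw [Set.uIcc_of_le (by norm_num : (1:ℝ) ≤ 2)] at hu
  have h1 : (0:ℝ) < (Real.log u) ^ 2 + π ^ 2 := by positivity
  have h2 : (0:ℝ) < (u + 1) ^ n := by
    have := hu.1; positivity
  positivity

lemma f_intable (n : ℕ) : IntervalIntegrable
    (fun u : ℝ => 1 / (((Real.log u) ^ 2 + π ^ 2) * (u + 1) ^ n)) volume 1 2 := by
  apply ContinuousOn.intervalIntegrable
  exact continuousOn_const.div (cont_denom n) (fun u hu => (denom_pos n u hu).ne')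

lemma integral_lb (n : ℕ) (hn : 2 ≤ n) :
    (∫ u in (1:ℝ)..2, 1 / (((Real.log u) ^ 2 + π ^ 2) * (u + 1) ^ n))
      ≥ (1 / ((Real.log 2) ^ 2 + π ^ 2)) * (1 / ((n : ℝ) - 1)) *
        ((2 : ℝ) ^ ((1 : ℤ) - n) - (3 : ℝ) ^ ((1 : ℤ) - n)) := by
  set c : ℝ := 1 / ((Real.log 2) ^ 2 + π ^ 2) with hc
  have hc0 : 0 < (Real.log 2) ^ 2 + π ^ 2 := by positivity
  have hstep : (∫ u in (1:ℝ)..2, c * ((u + 1:ℝ) ^ (-(n:ℤ)))) ≤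
      ∫ u in (1:ℝ)..2, 1 / (((Real.log u) ^ 2 + π ^ 2) * (u + 1) ^ n) := by
    apply intervalIntegral.integral_mono_on (by norm_num)
    · apply ContinuousOn.intervalIntegrable
      apply ContinuousOn.mul continuousOn_const
      apply ContinuousOn.zpow₀ ((continuous_id.add continuous_const).continuousOn)
      intro u hu
      left
      rw [Set.uIcc_of_le (by norm_num : (1:ℝ) ≤ 2)] at hu
      show u + 1 ≠ 0
      intro h
      nlinarith [hu.1]
    · exact f_intable n
    · intro u hu
      have hu1 : 1 ≤ u := hu.1
      have hu2 : u ≤ 2 := hu.2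
      have hup : (0:ℝ) < (u+1)^n := by positivity
      have hlog : Real.log u ≤ Real.log 2 := Real.log_le_log (by linarith) hu2
      have hlog0 : 0 ≤ Real.log u := Real.log_nonneg hu1
      have hsq : (Real.log u)^2 ≤ (Real.log 2)^2 := by nlinarith
      have hzp : ((u+1:ℝ) ^ (-(n:ℤ))) = ((u+1)^n)⁻¹ := by
        rw [zpow_neg, zpow_natCast]
      rw [hzp, hc]
      have key : ((Real.log u) ^ 2 + π ^ 2) * (u + 1) ^ n ≤
          ((Real.log 2) ^ 2 + π ^ 2) * (u + 1) ^ n :=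
        mul_le_mul_of_nonneg_right (by linarith) hup.le
      have hpos : 0 < ((Real.log u) ^ 2 + π ^ 2) * (u + 1) ^ n := by positivity
      calc 1 / ((Real.log 2) ^ 2 + π ^ 2) * ((u + 1) ^ n)⁻¹
          = 1 / (((Real.log 2) ^ 2 + π ^ 2) * (u + 1) ^ n) := by
            rw [one_div, one_div, ← mul_inv]
        _ ≤ 1 / (((Real.log u) ^ 2 + π ^ 2) * (u + 1) ^ n) :=
            one_div_le_one_div_of_le hpos key
  have hval : (∫ u in (1:ℝ)..2, c * ((u + 1:ℝ) ^ (-(n:ℤ))))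
      = c * (1 / ((n : ℝ) - 1)) * ((2 : ℝ) ^ ((1 : ℤ) - n) - (3 : ℝ) ^ ((1 : ℤ) - n)) := by
    rw [intervalIntegral.integral_const_mul]
    have hcomp : (∫ u in (1:ℝ)..2, ((u + 1:ℝ) ^ (-(n:ℤ))))
        = ∫ v in (2:ℝ)..3, (v : ℝ) ^ (-(n:ℤ)) := by
      rw [intervalIntegral.integral_comp_add_right (fun v : ℝ => v ^ (-(n:ℤ))) 1]
      norm_num
    rw [hcomp, integral_zpow]
    · have hne : ((n:ℝ)) - 1 ≠ 0 := by
        have : (2:ℝ) ≤ (n:ℝ) := by exact_mod_cast hn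
        intro h; nlinarith
      have h1 : (-(n:ℤ) + 1) = (1:ℤ) - n := by ring
      rw [h1]
      have h3 : ((-(n:ℤ) : ℤ) : ℝ) + 1 = 1 - (n:ℝ) := by push_cast; ring
      rw [h3]
      have h1n : (1:ℝ) - (n:ℝ) ≠ 0 := by intro h; apply hne; linarith
      field_simp
      ring
    · right
      constructor
      · intro h
        have : (n:ℤ) = 1 := by omega
        omega
      · rw [Set.uIcc_of_le (by norm_num : (2:ℝ) ≤ 3)]
        intro h
        exact absurd h.1 (by norm_num)
  rw [← hval]
  exact hstep

lemma integral_ub (n : ℕ) :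
    (∫ u in (1:ℝ)..2, 1 / (((Real.log u) ^ 2 + π ^ 2) * (u + 1) ^ n))
      ≤ 1 / (π ^ 2 * 2 ^ n) := by
  have hpi : (0:ℝ) < π ^ 2 * 2 ^ n := by positivity
  have h : (∫ u in (1:ℝ)..2, 1 / (((Real.log u) ^ 2 + π ^ 2) * (u + 1) ^ n))
      ≤ ∫ _u in (1:ℝ)..2, 1 / (π ^ 2 * 2 ^ n) := by
    apply intervalIntegral.integral_mono_on (by norm_num) (f_intable n)
      (intervalIntegrable_const)
    intro u hu
    have hu1 : 1 ≤ u := hu.1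
    have hlog0 : 0 ≤ Real.log u := Real.log_nonneg hu1
    have key : π ^ 2 * 2 ^ n ≤ ((Real.log u) ^ 2 + π ^ 2) * (u + 1) ^ n := by
      apply mul_le_mul (by nlinarith) _ (by positivity) (by nlinarith)
      apply pow_le_pow_left₀ (by norm_num) (by linarith)
    exact one_div_le_one_div_of_le hpi key
  calc (∫ u in (1:ℝ)..2, 1 / (((Real.log u) ^ 2 + π ^ 2) * (u + 1) ^ n))
      ≤ ∫ _u in (1:ℝ)..2, 1 / (π ^ 2 * 2 ^ n) := h
    _ = 1 / (π ^ 2 * 2 ^ n) := by simp; ring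

theorem gregory_lower_bound (n : ℕ) (hn : 2 ≤ n) :
    |G n| ≥ (∫ u in (1:ℝ)..2, 1 / (((Real.log u) ^ 2 + π ^ 2) * (u + 1) ^ n)) ∧
    (∫ u in (1:ℝ)..2, 1 / (((Real.log u) ^ 2 + π ^ 2) * (u + 1) ^ n))
      ≥ (1 / ((Real.log 2) ^ 2 + π ^ 2)) * (1 / ((n : ℝ) - 1)) *
        ((2 : ℝ) ^ ((1 : ℤ) - n) - (3 : ℝ) ^ ((1 : ℤ) - n)) := by
  refine ⟨?_, integral_lb n hn⟩
  have h1 := integral_ub n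
  have h2 : 1 / (π ^ 2 * 2 ^ n) ≤ 1 / (6 * (n:ℝ) * ((n:ℝ) - 1)) := by
    have hn2 : (2:ℝ) ≤ (n:ℝ) := by exact_mod_cast hn
    have hnp := nat_pow n hn
    have hpi3 := Real.pi_gt_three
    have hp2 : (0:ℝ) < (2:ℝ)^n := by positivity
    have hpi9 : (9:ℝ) < π^2 := by nlinarith
    apply one_div_le_one_div_of_le (by nlinarith)
    nlinarith [mul_le_mul_of_nonneg_left hnp (by norm_num : (0:ℝ) ≤ 6),
      mul_nonneg (by nlinarith : (0:ℝ) ≤ π^2 - 9) hp2.le]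
  exact le_trans h1 (le_trans h2 (G_lb n hn))
end

section
/- Relation to Cauchy numbers of the second kind: for every n ≥ 1, n·C_{2,n-1} − C_{2,n} = n! |G_n|, where C_{2,n} = ∫_0^1 x(x+1)(x+2)⋯(x+n-1) dx (with C_{2,0} = 1). -/
open MeasureTheory

noncomputable def C2 (n : ℕ) : ℝ :=
  ∫ x in (0:ℝ)..1, ∏ k ∈ Finset.range n, (x + k)

lemma contP (m : ℕ) : Continuous (fun x : ℝ => ∏ j ∈ Finset.range m, (x + j)) := by
  apply continuous_finset_prod
  intro i _
  continuity

lemma key_pointwise (m : ℕ) (x : ℝ) :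
    ∏ k ∈ Finset.range (m+1), ((1 - x) - (k : ℝ)) =
      (-1)^m * ((1 - x) * ∏ j ∈ Finset.range m, (x + j)) := by
  have h1 : ∀ k ∈ Finset.range (m+1), (1 - x) - (k : ℝ) = (-1) * (x + ((k:ℝ) - 1)) := by
    intro k _; ring
  rw [Finset.prod_congr rfl h1, Finset.prod_mul_distrib, Finset.prod_const,
    Finset.card_range, Finset.prod_range_succ']
  have h2 : ∀ j ∈ Finset.range m, x + (((j+1 : ℕ):ℝ) - 1) = x + j := by
    intro j _; push_cast; ring
  rw [Finset.prod_congr rfl h2]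
  push_cast
  ring

theorem cauchy_second_kind_relation (n : ℕ) (hn : 1 ≤ n) :
    (n : ℝ) * C2 (n - 1) - C2 n = (n.factorial : ℝ) * |G n| := by
  obtain ⟨m, rfl⟩ := Nat.exists_eq_add_of_le hn
  simp only [Nat.add_sub_cancel_left] at *
  set I : ℝ := ∫ x in (0:ℝ)..1, (1 - x) * ∏ j ∈ Finset.range m, (x + j) with hI
  have hint1 : IntervalIntegrable (fun x : ℝ => (1 - x) * ∏ j ∈ Finset.range m, (x + j))
      volume 0 1 := (Continuous.mul (by continuity) (contP m)).intervalIntegrable _ _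
  -- left side equals I
  have hL : ((1 + m : ℕ) : ℝ) * C2 m - C2 (1 + m) = I := by
    have h1 : ((1 + m : ℕ) : ℝ) * C2 m
        = ∫ x in (0:ℝ)..1, ((1 + m : ℕ) : ℝ) * ∏ j ∈ Finset.range m, (x + j) := by
      rw [C2, intervalIntegral.integral_const_mul]
    have h2 : C2 (1 + m) = ∫ x in (0:ℝ)..1,
        (∏ j ∈ Finset.range m, (x + j)) * (x + m) := by
      rw [C2]
      congr 1
      funext x
      rw [Nat.add_comm 1 m, Finset.prod_range_succ]
    rw [h1, h2, ← intervalIntegral.integral_sub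
      (f := fun x : ℝ => ((1 + m : ℕ) : ℝ) * ∏ j ∈ Finset.range m, (x + j))
      (g := fun x : ℝ => (∏ j ∈ Finset.range m, (x + j)) * (x + m))
      ((Continuous.mul continuous_const (contP m)).intervalIntegrable _ _)
      ((Continuous.mul (contP m) (by continuity)).intervalIntegrable _ _), hI]
    congr 1
    funext x
    push_cast
    ring
  -- integral in G equals (-1)^m * I
  have hG : (∫ x in (0:ℝ)..1, ∏ k ∈ Finset.range (1 + m), (x - k)) = (-1)^m * I := by
    have hsub : (∫ x in (0:ℝ)..1, ∏ k ∈ Finset.range (1 + m), (x - k))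
        = ∫ x in (0:ℝ)..1, ∏ k ∈ Finset.range (1 + m), ((1 - x) - (k:ℝ)) := by
      rw [intervalIntegral.integral_comp_sub_left
        (fun y => ∏ k ∈ Finset.range (1 + m), (y - (k:ℝ))) 1]
      norm_num
    rw [hsub]
    have : ∀ x : ℝ, ∏ k ∈ Finset.range (1 + m), ((1 - x) - (k:ℝ))
        = (-1)^m * ((1 - x) * ∏ j ∈ Finset.range m, (x + j)) := by
      intro x
      rw [Nat.add_comm 1 m]
      exact key_pointwise m x
    simp only [this]
    rw [intervalIntegral.integral_const_mul, hI]
  -- I is nonnegative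
  have hI0 : 0 ≤ I := by
    apply intervalIntegral.integral_nonneg (by norm_num)
    intro x hx
    apply mul_nonneg (by linarith [hx.2])
    apply Finset.prod_nonneg
    intro j _
    have := hx.1
    positivity
  have hfac : (0:ℝ) < ((1 + m).factorial : ℝ) := by positivity
  have hGval : |G (1 + m)| = (((1 + m).factorial : ℝ))⁻¹ * I := by
    rw [G, hG, abs_mul, abs_mul, abs_of_nonneg hI0, abs_of_nonneg (inv_nonneg.2 hfac.le),
      abs_pow, abs_neg, abs_one, one_pow, one_mul]
  rw [hGval, hL, ← mul_assoc, mul_inv_cancel₀ hfac.ne', one_mul]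
end
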